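/- arXiv:1809.01340 — 5 statements merged into one kernel-verified Lean document; each statement's English description precedes it below -/
import Mathlib

section
/- For every even positive integer n, there are no uniquely sorted permutations in S_n; that is, no π ∈ S_n has fertility exactly 1 when n is even. -/
open scoped BigOperators

/-- The `i`-th entry (1-indexed) of a word. -/
def entry (π : List ℕ) (i : ℕ) : ℕ := π.getD (i - 1) 0

/-- Fuel-based implementation of the stack-sorting recursion
`s(L m R) = s(L) s(R) m` where `m` is the largest letter. -/
def stackSortFuel : ℕ → List ℕ → List ℕ
  | 0, _ => []
  | fuel+1, w =>
    if w = [] then []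
    else
      let m := w.foldr max 0
      stackSortFuel fuel (w.takeWhile (fun x => x != m)) ++
        stackSortFuel fuel ((w.dropWhile (fun x => x != m)).tail) ++ [m]

/-- The (West) stack-sorting map `s`. -/
def stackSort (w : List ℕ) : List ℕ := stackSortFuel w.length w

/-- `π` is a permutation of `{1, …, n}`, written as a word. -/
def InSn (n : ℕ) (π : List ℕ) : Prop := π.Perm (List.range' 1 n)

/-- The fertility of `π`: the number of `σ ∈ S_n` with `s(σ) = π`. -/
noncomputable def fertility (n : ℕ) (π : List ℕ) : ℕ :=
  {σ : List ℕ | InSn n σ ∧ stackSort σ = π}.ncard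

/-- The set of descents of `π` (1-indexed): indices `i` with `π_i > π_{i+1}`. -/
def descents (π : List ℕ) : Finset ℕ :=
  (Finset.Icc 1 (π.length - 1)).filter (fun i => entry π (i + 1) < entry π i)

/-- A hook of `π`, recorded by the positions of its southwest and northeast endpoints. -/
def IsHook (π : List ℕ) (h : ℕ × ℕ) : Prop :=
  1 ≤ h.1 ∧ h.1 < h.2 ∧ h.2 ≤ π.length ∧ entry π h.1 < entry π h.2

/-- The set of lattice points of the plane lying on the hook `h`
(the vertical segment together with the horizontal segment). -/
def hookPoints (π : List ℕ) (h : ℕ × ℕ) : Set (ℕ × ℕ) :=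
  {p | (p.1 = h.1 ∧ entry π h.1 ≤ p.2 ∧ p.2 ≤ entry π h.2) ∨
       (h.1 ≤ p.1 ∧ p.1 ≤ h.2 ∧ p.2 = entry π h.2)}

/-- `H` is a valid hook configuration of `π`: the tuple of hooks (listed by southwest
endpoints, which are exactly the descent tops in increasing order) such that no point of the
plot lies above a hook, and hooks do not intersect except that the northeast endpoint of one
may be the southwest endpoint of another. -/
def IsVHC (π : List ℕ) (H : List (ℕ × ℕ)) : Prop :=
  H.map Prod.fst = (descents π).sort (· ≤ ·) ∧
  (∀ h ∈ H, IsHook π h) ∧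
  (∀ h ∈ H, ∀ m : ℕ, h.1 ≤ m → m ≤ h.2 → ¬ entry π h.2 < entry π m) ∧
  (∀ h ∈ H, ∀ h' ∈ H, h ≠ h' → (hookPoints π h ∩ hookPoints π h').Nonempty →
    h.2 = h'.1 ∨ h'.2 = h.1)

/-- The set of normalized valid hook configurations on `n` points, recorded together with
their underlying permutations. -/
def VHCSet (n : ℕ) : Set (List ℕ × List (ℕ × ℕ)) :=
  {p | InSn n p.1 ∧ IsVHC p.1 p.2}

/-- The set of normalized valid hook configurations on `n` points with exactly `h` hooks. -/
def VHCSetH (n h : ℕ) : Set (List ℕ × List (ℕ × ℕ)) :=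
  {p | InSn n p.1 ∧ IsVHC p.1 p.2 ∧ p.2.length = h}

/-- In the coloring induced by `H`, the hook `h` is a candidate color for the point in
position `m`: its horizontal part passes above the point, and it is not the hook whose
southwest endpoint is that very point. -/
def CandidateHook (π : List ℕ) (H : List (ℕ × ℕ)) (m : ℕ) (h : ℕ × ℕ) : Prop :=
  h ∈ H ∧ h.1 ≤ m ∧ m < h.2 ∧ entry π m < entry π h.2 ∧ h.1 ≠ m

/-- `h` is the lowest hook passing above the point in position `m`; the point then receives
the color of `h`. -/
def LowestHook (π : List ℕ) (H : List (ℕ × ℕ)) (m : ℕ) (h : ℕ × ℕ) : Prop :=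
  CandidateHook π H m h ∧ ∀ h', CandidateHook π H m h' → entry π h.2 ≤ entry π h'.2

/-- The point in position `m` sees the sky: no hook passes above it. -/
def SkyColored (π : List ℕ) (H : List (ℕ × ℕ)) (m : ℕ) : Prop :=
  ∀ h, ¬ CandidateHook π H m h

/-- The point in position `m` is one of the points of the plot that gets colored,
i.e. it is not a northeast endpoint of a hook of `H`. -/
def ColoredPoint (π : List ℕ) (H : List (ℕ × ℕ)) (m : ℕ) : Prop :=
  1 ≤ m ∧ m ≤ π.length ∧ ∀ h ∈ H, h.2 ≠ m

/-- The points in positions `m` and `m'` receive the same color. -/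
def SameColor (π : List ℕ) (H : List (ℕ × ℕ)) (m m' : ℕ) : Prop :=
  (SkyColored π H m ∧ SkyColored π H m') ∨
  (∃ h, LowestHook π H m h ∧ LowestHook π H m' h)

/-- `colorCount π H t` is the number of points of the plot of `π` receiving the `t`-th color
in the coloring induced by `H`: the sky color for `t = 0`, and the color of the `t`-th hook
for `1 ≤ t ≤ k`. -/
noncomputable def colorCount (π : List ℕ) (H : List (ℕ × ℕ)) (t : ℕ) : ℕ :=
  if t = 0 then {m : ℕ | ColoredPoint π H m ∧ SkyColored π H m}.ncard
  else {m : ℕ | ColoredPoint π H m ∧ LowestHook π H m (H.getD (t - 1) (0, 0))}.ncard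

/-- `ρ` is a partition of the set `{1, …, n}`. -/
def IsPartitionOf (n : ℕ) (ρ : Finset (Finset ℕ)) : Prop :=
  (∀ B ∈ ρ, B.Nonempty) ∧
  (∀ B ∈ ρ, ∀ B' ∈ ρ, B ≠ B' → Disjoint B B') ∧
  ρ.sup id = Finset.Icc 1 n

/-- `B` and `B'` cross with `i < j < k < l`, `i,k ∈ B`, `j,l ∈ B'`. -/
def Crosses (B B' : Finset ℕ) : Prop :=
  ∃ i ∈ B, ∃ k ∈ B, ∃ j ∈ B', ∃ l ∈ B', i < j ∧ j < k ∧ k < l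

/-- Two distinct blocks form a crossing. -/
def CrossEdge (B B' : Finset ℕ) : Prop :=
  B ≠ B' ∧ (Crosses B B' ∨ Crosses B' B)

/-- The crossing graph of a partition: vertices are the blocks, two blocks adjacent
iff they form a crossing. -/
def crossingGraph (ρ : Finset (Finset ℕ)) : SimpleGraph {B // B ∈ ρ} where
  Adj B B' := CrossEdge B.1 B'.1
  symm := ⟨fun _ _ hBB => ⟨hBB.1.symm, hBB.2.symm⟩⟩
  loopless := ⟨fun _ hBB => hBB.1 rfl⟩

/-- `(ρ, d)` is a pair consisting of a connected partition `ρ` of `{1, …, n}` together with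
an acyclic orientation `d` of its crossing graph whose unique source is the block
containing `n`; i.e. `(ρ, d) ∈ P̃^c(n)`. -/
def IsOrientedPartitionPair (n : ℕ) (ρ : Finset (Finset ℕ))
    (d : Finset ℕ → Finset ℕ → Prop) : Prop :=
  IsPartitionOf n ρ ∧ (crossingGraph ρ).Connected ∧
  (∀ B B', d B B' → B ∈ ρ ∧ B' ∈ ρ ∧ CrossEdge B B') ∧
  (∀ B ∈ ρ, ∀ B' ∈ ρ, CrossEdge B B' → (d B B' ∨ d B' B)) ∧
  (∀ B B', d B B' → ¬ d B' B) ∧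
  (∀ B, ¬ Relation.TransGen d B B) ∧
  (∀ B ∈ ρ, ((∀ B', ¬ d B' B) ↔ n ∈ B))

/-- The set `P̃^c(n)`. -/
def PtildeC (n : ℕ) : Set (Finset (Finset ℕ) × (Finset ℕ → Finset ℕ → Prop)) :=
  {p | IsOrientedPartitionPair n p.1 p.2}

/-- The set `M̃^c(n)`: the pairs of `P̃^c(n)` whose partition is a matching. -/
def MtildeC (n : ℕ) : Set (Finset (Finset ℕ) × (Finset ℕ → Finset ℕ → Prop)) :=
  {p | IsOrientedPartitionPair n p.1 p.2 ∧ ∀ B ∈ p.1, B.card = 2}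

/-- The tail length of `π ∈ S_n`: the smallest `i ≥ 0` with `π_{n-i} ≠ n-i`
(and `n` for the identity permutation). -/
noncomputable def tailLength (n : ℕ) (π : List ℕ) : ℕ :=
  if h : ∃ i, i < n ∧ entry π (n - i) ≠ n - i then Nat.find h else n

/-- `h` is the top hook of `H`: the hook whose northeast endpoint is farthest to the north. -/
def TopHook (π : List ℕ) (H : List (ℕ × ℕ)) (h : ℕ × ℕ) : Prop :=
  h ∈ H ∧ ∀ h' ∈ H, entry π h'.2 ≤ entry π h.2

/-- The eye of `π` is `e`: for a valid hook configuration of `π` with top hook `h`, the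
leftmost point of the sheltered piece (the points strictly under the top hook) has value `e`. -/
def HasEye (π : List ℕ) (e : ℕ) : Prop :=
  ∃ H, IsVHC π H ∧ ∃ h, TopHook π H h ∧
    ∃ m, (h.1 < m ∧ m < h.2 ∧ entry π m < entry π h.2) ∧
      (∀ m', (h.1 < m' ∧ m' < h.2 ∧ entry π m' < entry π h.2) → m ≤ m') ∧
      entry π m = e

/-- `D_m(n)`: the total number of valid hook configurations of permutations in `S_n`
with tail length `m`. -/
noncomputable def Dcount (m n : ℕ) : ℕ :=
  {p : List ℕ × List (ℕ × ℕ) |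
    InSn n p.1 ∧ tailLength n p.1 = m ∧ IsVHC p.1 p.2}.ncard

/-- `D_{≥m}(n) = Σ_{ℓ=m}^n D_ℓ(n)`. -/
noncomputable def Dge (m n : ℕ) : ℕ := ∑ l ∈ Finset.Icc m n, Dcount l n

/-- `E_m(n)`: the number of uniquely sorted permutations in `S_n` with tail length `m`. -/
noncomputable def Ecount (m n : ℕ) : ℕ :=
  {π : List ℕ | InSn n π ∧ fertility n π = 1 ∧ tailLength n π = m}.ncard

/-- `E_{≥m}(n) = Σ_{ℓ=m}^n E_ℓ(n)`. -/
noncomputable def Ege (m n : ℕ) : ℕ := ∑ l ∈ Finset.Icc m n, Ecount l n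

/-- Binary plane trees with vertices labeled by positive integers
(`leaf` denotes the absence of a vertex). -/
inductive BTree : Type
  | leaf : BTree
  | node : BTree → ℕ → BTree → BTree

namespace BTree

/-- The in-order (symmetric order) reading of a tree. -/
def inorder : BTree → List ℕ
  | leaf => []
  | node l x r => inorder l ++ x :: inorder r

/-- The postorder reading of a tree. -/
def postorder : BTree → List ℕ
  | leaf => []
  | node l x r => postorder l ++ postorder r ++ [x]

/-- Every non-root vertex has a label smaller than the label of its parent. -/
def IsDecreasing : BTree → Prop
  | leaf => True
  | node l x r => (∀ y ∈ inorder l, y < x) ∧ (∀ y ∈ inorder r, y < x) ∧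
      IsDecreasing l ∧ IsDecreasing r

/-- A decreasing binary plane tree: labels are distinct positive integers, decreasing
away from the root. -/
def IsDBPT (T : BTree) : Prop :=
  IsDecreasing T ∧ T.inorder.Nodup ∧ ∀ y ∈ T.inorder, 0 < y

/-- `T` is lonely: no other decreasing binary plane tree has the same postorder reading. -/
def Lonely (T : BTree) : Prop :=
  IsDBPT T ∧ ∀ T', IsDBPT T' → postorder T' = postorder T → T' = T

/-- Every vertex has either 0 or 2 children. -/
def IsFull : BTree → Prop
  | leaf => True
  | node l _ r => ((l = leaf) ↔ (r = leaf)) ∧ IsFull l ∧ IsFull r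

/-- The root label (0 for the empty tree). -/
def rootD : BTree → ℕ
  | leaf => 0
  | node _ x _ => x

/-- Canonical trees: every vertex with a left child also has a right child, and every left
child has a label larger than the label of its leftmost cousin (the leftmost vertex of the
sibling right subtree). -/
def IsCanonical : BTree → Prop
  | leaf => True
  | node l _ r =>
      (l ≠ leaf → (r ≠ leaf ∧ (inorder r).headD 0 < rootD l)) ∧
      IsCanonical l ∧ IsCanonical r

end BTree

/-- The exponential of a formal power series with zero constant term. -/
noncomputable def psExp (C : PowerSeries ℝ) : PowerSeries ℝ :=
  PowerSeries.mk fun n =>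
    ∑ k ∈ Finset.range (n + 1), (PowerSeries.coeff n (C ^ k)) / (k.factorial : ℝ)

namespace StmtAux

lemma le_foldr_max (l : List ℕ) : ∀ x ∈ l, x ≤ l.foldr max 0 := by
  induction l with
  | nil => simp
  | cons a t ih =>
    intro x hx
    rcases List.mem_cons.1 hx with h | h
    · subst h; exact le_max_left _ _
    · exact le_trans (ih x h) (le_max_right _ _)

lemma foldr_max_le (l : List ℕ) (m : ℕ) (h : ∀ x ∈ l, x ≤ m) : l.foldr max 0 ≤ m := by
  induction l with
  | nil => simp
  | cons a t ih =>
    simp only [List.foldr_cons]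
    exact max_le (h a (by simp)) (ih fun x hx => h x (List.mem_cons_of_mem _ hx))

lemma foldr_max_mem (l : List ℕ) (h : l ≠ []) : l.foldr max 0 ∈ l := by
  induction l with
  | nil => exact absurd rfl h
  | cons a t ih =>
    rcases eq_or_ne t [] with ht | ht
    · subst ht; simp
    · have := ih ht
      simp only [List.foldr_cons]
      rcases le_total a (t.foldr max 0) with hle | hle
      · rw [max_eq_right hle]; exact List.mem_cons_of_mem _ this
      · rw [max_eq_left hle]; simp

lemma dropWhile_ne_nil (w : List ℕ) (hw : w ≠ []) :
    w.dropWhile (fun x => x != w.foldr max 0) ≠ [] := by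
  rw [Ne, List.dropWhile_eq_nil_iff]
  push_neg
  exact ⟨w.foldr max 0, foldr_max_mem w hw, by simp⟩

lemma dropWhile_eq (w : List ℕ) (hw : w ≠ []) :
    w.dropWhile (fun x => x != w.foldr max 0) =
      w.foldr max 0 :: (w.dropWhile (fun x => x != w.foldr max 0)).tail := by
  have hdw := dropWhile_ne_nil w hw
  have hhead : (w.dropWhile (fun x => x != w.foldr max 0)).head hdw = w.foldr max 0 := by
    have := List.head_dropWhile_not (fun x => x != w.foldr max 0) hdw
    simpa using this
  have h2 := List.cons_head_tail hdw
  rw [hhead] at h2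
  exact h2.symm

/-- Decomposition of a word at its (unique) maximum. -/
lemma decomp (w : List ℕ) (hw : w ≠ []) (hnd : w.Nodup) :
    w = w.takeWhile (fun x => x != w.foldr max 0) ++ w.foldr max 0 ::
        (w.dropWhile (fun x => x != w.foldr max 0)).tail ∧
    (∀ x ∈ w.takeWhile (fun x => x != w.foldr max 0), x < w.foldr max 0) ∧
    (∀ x ∈ (w.dropWhile (fun x => x != w.foldr max 0)).tail, x < w.foldr max 0) := by
  have hsplit : w = w.takeWhile (fun x => x != w.foldr max 0) ++ w.foldr max 0 ::
      (w.dropWhile (fun x => x != w.foldr max 0)).tail := by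
    conv_lhs => rw [← List.takeWhile_append_dropWhile (p := fun x => x != w.foldr max 0) (l := w)]
    rw [← dropWhile_eq w hw]
  refine ⟨hsplit, ?_, ?_⟩
  · intro x hx
    have hne : x ≠ w.foldr max 0 := by simpa using List.mem_takeWhile_imp hx
    have hle : x ≤ w.foldr max 0 :=
      le_foldr_max w x ((List.takeWhile_sublist _).subset hx)
    exact lt_of_le_of_ne hle hne
  · intro x hx
    have hxw : x ∈ w :=
      ((List.tail_sublist _).trans (List.dropWhile_sublist _)).subset hx
    have hle : x ≤ w.foldr max 0 := le_foldr_max w x hxw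
    have hne : x ≠ w.foldr max 0 := by
      intro h; subst h
      have hnd2 := hnd
      rw [hsplit] at hnd2
      have h2 := (List.nodup_append.1 hnd2).2.1
      exact (List.nodup_cons.1 h2).1 hx
    exact lt_of_le_of_ne hle hne

lemma takeWhile_length_lt (w : List ℕ) (hw : w ≠ []) :
    (w.takeWhile (fun x => x != w.foldr max 0)).length < w.length := by
  rcases lt_or_eq_of_le (List.Sublist.length_le (List.takeWhile_sublist _)) with h | h
  · exact h
  · exfalso
    have heq : w.takeWhile (fun x => x != w.foldr max 0) = w :=
      (List.takeWhile_sublist _).eq_of_length h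
    have hmem : w.foldr max 0 ∈ w.takeWhile (fun x => x != w.foldr max 0) := by
      rw [heq]; exact foldr_max_mem w hw
    have := List.mem_takeWhile_imp hmem
    simp at this

lemma dropWhile_tail_length_lt (w : List ℕ) (hw : w ≠ []) :
    ((w.dropWhile (fun x => x != w.foldr max 0)).tail).length < w.length := by
  have h1 : ((w.dropWhile (fun x => x != w.foldr max 0)).tail).length <
      (w.dropWhile (fun x => x != w.foldr max 0)).length := by
    rw [dropWhile_eq w hw]; simp
  exact lt_of_lt_of_le h1 (List.Sublist.length_le (List.dropWhile_sublist _))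

/-- Fuel irrelevance. -/
lemma ssf_eq : ∀ f1 : ℕ, ∀ f2 : ℕ, ∀ w : List ℕ, w.length ≤ f1 → w.length ≤ f2 →
    stackSortFuel f1 w = stackSortFuel f2 w := by
  intro f1
  induction f1 with
  | zero =>
    intro f2 w h1 _
    have : w = [] := List.length_eq_zero_iff.1 (Nat.le_zero.1 h1)
    subst this
    cases f2 <;> simp [stackSortFuel]
  | succ f ih =>
    intro f2 w h1 h2
    rcases eq_or_ne w [] with hw | hw
    · subst hw; cases f2 <;> simp [stackSortFuel]
    · have hlen : 0 < w.length := List.length_pos_iff.2 hw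
      obtain ⟨f2', rfl⟩ : ∃ f2', f2 = f2' + 1 := ⟨f2 - 1, by omega⟩
      simp only [stackSortFuel, if_neg hw]
      have htw := takeWhile_length_lt w hw
      have hdw := dropWhile_tail_length_lt w hw
      rw [ih f2' _ (by omega) (by omega), ih f2' _ (by omega) (by omega)]

lemma stackSort_nil : stackSort [] = [] := rfl

/-- The key recursion for stackSort. -/
lemma stackSort_append (L : List ℕ) (m : ℕ) (R : List ℕ)
    (hL : ∀ x ∈ L, x < m) (hR : ∀ x ∈ R, x ≤ m) :
    stackSort (L ++ m :: R) = stackSort L ++ stackSort R ++ [m] := by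
  have hw : L ++ m :: R ≠ [] := by simp
  have hmax : (L ++ m :: R).foldr max 0 = m := by
    apply le_antisymm
    · apply foldr_max_le
      intro x hx
      rcases List.mem_append.1 hx with h | h
      · exact le_of_lt (hL x h)
      · rcases List.mem_cons.1 h with h | h
        · omega
        · exact hR x h
    · exact le_foldr_max _ m (by simp)
  have hTL : L.takeWhile (fun x => x != m) = L :=
    List.takeWhile_eq_self_iff.2 (fun x hx => by simpa using ne_of_lt (hL x hx))
  have hDL : L.dropWhile (fun x => x != m) = [] :=
    List.dropWhile_eq_nil_iff.2 (fun x hx => by simpa using ne_of_lt (hL x hx))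
  have htake : (L ++ m :: R).takeWhile (fun x => x != m) = L := by
    rw [List.takeWhile_append, if_pos (by rw [hTL]),
      List.takeWhile_cons_of_neg (by simp), List.append_nil]
  have hdrop : (L ++ m :: R).dropWhile (fun x => x != m) = m :: R := by
    rw [List.dropWhile_append, if_pos (by rw [hDL]; rfl),
      List.dropWhile_cons_of_neg (by simp)]
  show stackSortFuel (L ++ m :: R).length (L ++ m :: R) = _
  have hlen : (L ++ m :: R).length = L.length + R.length + 1 := by simp; omega
  rw [hlen]
  simp only [stackSortFuel, if_neg hw, hmax, htake, hdrop, List.tail_cons]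
  rw [ssf_eq (L.length + R.length) L.length L (by omega) le_rfl,
      ssf_eq (L.length + R.length) R.length R (by omega) le_rfl]
  rfl

end StmtAux

namespace StmtAux

/-- Fuel-based fixed-point-free involution on preimage sets. -/
def invF : ℕ → List ℕ → List ℕ
  | 0, w => w
  | fuel+1, w =>
    if w = [] then w
    else
      let m := w.foldr max 0
      let L := w.takeWhile (fun x => x != m)
      let R := (w.dropWhile (fun x => x != m)).tail
      if Even L.length then
        if L = [] then R ++ [m] else invF fuel L ++ m :: R
      else
        if R = [] then m :: L else L ++ m :: invF fuel R

def myInv (w : List ℕ) : List ℕ := invF w.length w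

lemma invF_eq : ∀ f1 : ℕ, ∀ f2 : ℕ, ∀ w : List ℕ, w.length ≤ f1 → w.length ≤ f2 →
    invF f1 w = invF f2 w := by
  intro f1
  induction f1 with
  | zero =>
    intro f2 w h1 _
    have : w = [] := List.length_eq_zero_iff.1 (Nat.le_zero.1 h1)
    subst this
    cases f2 <;> simp [invF]
  | succ f ih =>
    intro f2 w h1 h2
    rcases eq_or_ne w [] with hw | hw
    · subst hw; cases f2 <;> simp [invF]
    · have hlen : 0 < w.length := List.length_pos_iff.2 hw
      obtain ⟨f2', rfl⟩ : ∃ f2', f2 = f2' + 1 := ⟨f2 - 1, by omega⟩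
      simp only [invF, if_neg hw]
      have htw := takeWhile_length_lt w hw
      have hdw := dropWhile_tail_length_lt w hw
      rw [ih f2' _ (by omega) (by omega), ih f2' _ (by omega) (by omega)]

lemma main : ∀ N : ℕ, ∀ w : List ℕ, w.length ≤ N → w.Nodup → w ≠ [] → Even w.length →
    (myInv w).Perm w ∧ stackSort (myInv w) = stackSort w ∧ myInv w ≠ w := by
  intro N
  induction N with
  | zero =>
    intro w h1 _ hne _
    exact absurd (List.length_eq_zero_iff.1 (Nat.le_zero.1 h1)) hne
  | succ N ih =>
    intro w hwN hnd hne hev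
    obtain ⟨hsplit, hLlt, hRlt⟩ := decomp w hne hnd
    set m := w.foldr max 0 with hm
    set L := w.takeWhile (fun x => x != m) with hLdef
    set R := (w.dropWhile (fun x => x != m)).tail with hRdef
    have hlen : L.length + R.length + 1 = w.length := by
      conv_rhs => rw [hsplit]
      simp
      omega
    have hndLR : (L ++ m :: R).Nodup := by rw [← hsplit]; exact hnd
    have hndL : L.Nodup := (List.nodup_append.1 hndLR).1
    have hndR : R.Nodup := (List.nodup_cons.1 (List.nodup_append.1 hndLR).2.1).2
    have hLle : ∀ x ∈ L, x ≤ m := fun x hx => le_of_lt (hLlt x hx)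
    have hRle : ∀ x ∈ R, x ≤ m := fun x hx => le_of_lt (hRlt x hx)
    obtain ⟨k, hk⟩ : ∃ k, w.length = k + 1 :=
      ⟨w.length - 1, by have := List.length_pos_iff.2 hne; omega⟩
    have hLk : L.length ≤ k := by
      have h := takeWhile_length_lt w hne
      rw [← hm, ← hLdef] at h
      omega
    have hRk : R.length ≤ k := by
      have h := dropWhile_tail_length_lt w hne
      rw [← hm, ← hRdef] at h
      omega
    have hunfold : myInv w =
        if Even L.length then
          if L = [] then R ++ [m] else invF k L ++ m :: R
        else
          if R = [] then m :: L else L ++ m :: invF k R := by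
      rw [myInv, hk]
      simp only [invF, if_neg hne]
      rfl
    have hsw : stackSort w = stackSort L ++ stackSort R ++ [m] := by
      conv_lhs => rw [hsplit]
      exact stackSort_append L m R hLlt hRle
    by_cases hpar : Even L.length
    · by_cases hL0 : L = []
      · -- swap: w = m :: R  ↦  R ++ [m]
        rw [hunfold, if_pos hpar, if_pos hL0]
        have hsplit' : w = m :: R := by rw [hsplit, hL0]; rfl
        have hR0 : R ≠ [] := by
          intro h
          rw [hL0, h] at hlen
          obtain ⟨t, ht⟩ := hev
          simp at hlen
          omega
        refine ⟨?_, ?_, ?_⟩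
        · rw [hsplit']
          exact List.perm_append_singleton m R
        · rw [stackSort_append R m [] hRlt (by simp), hsw, hL0]
          simp [stackSort, stackSortFuel]
        · intro h
          rw [hsplit'] at h
          obtain ⟨r, R', hR'⟩ : ∃ r R', R = r :: R' :=
            ⟨R.head hR0, R.tail, (List.cons_head_tail hR0).symm⟩
          rw [hR'] at h
          have : r = m := by
            simpa using congrArg (fun l => l.headD 0) h
          exact absurd this (ne_of_lt (hRlt r (by rw [hR']; simp)))
      · -- recurse into L
        rw [hunfold, if_pos hpar, if_neg hL0]
        have hmyL : invF k L = myInv L := invF_eq k L.length L hLk le_rfl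
        rw [hmyL]
        obtain ⟨pL, sL, nL⟩ := ih L (by omega) hndL hL0 hpar
        refine ⟨?_, ?_, ?_⟩
        · rw [hsplit]
          exact pL.append_right (m :: R)
        · rw [stackSort_append (myInv L) m R (fun x hx => hLlt x (pL.subset hx)) hRle,
            hsw, sL]
        · intro h
          rw [hsplit] at h
          have := (List.append_inj h (pL.length_eq)).1
          exact nL this
    · by_cases hR0 : R = []
      · -- swap: w = L ++ [m]  ↦  m :: L
        rw [hunfold, if_neg hpar, if_pos hR0]
        have hsplit' : w = L ++ [m] := by rw [hsplit, hR0]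
        have hL0 : L ≠ [] := by
          intro h; rw [h] at hpar; simp at hpar
        refine ⟨?_, ?_, ?_⟩
        · rw [hsplit']
          exact (List.perm_append_singleton m L).symm
        · have : stackSort ([] ++ m :: L) = stackSort [] ++ stackSort L ++ [m] :=
            stackSort_append [] m L (by simp) hLle
          simp only [List.nil_append] at this
          rw [this, hsw, hR0]
          simp [stackSort, stackSortFuel]
        · intro h
          rw [hsplit'] at h
          obtain ⟨l, L', hL'⟩ : ∃ l L', L = l :: L' :=
            ⟨L.head hL0, L.tail, (List.cons_head_tail hL0).symm⟩
          rw [hL'] at h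
          have : m = l := by
            simpa using congrArg (fun l => l.headD 0) h
          exact absurd this.symm (ne_of_lt (hLlt l (by rw [hL']; simp)))
      · -- recurse into R
        rw [hunfold, if_neg hpar, if_neg hR0]
        have hmyR : invF k R = myInv R := invF_eq k R.length R hRk le_rfl
        rw [hmyR]
        have hRpar : Even R.length := by
          rcases Nat.even_or_odd L.length with h | h
          · exact absurd h hpar
          · rcases hev with ⟨t, ht⟩
            rcases h with ⟨t', ht'⟩
            exact ⟨R.length / 2, by omega⟩
        obtain ⟨pR, sR, nR⟩ := ih R (by omega) hndR hR0 hRpar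
        refine ⟨?_, ?_, ?_⟩
        · rw [hsplit]
          exact ((pR.cons m).append_left L)
        · rw [stackSort_append L m (myInv R) hLlt (fun x hx => hRle x (pR.subset hx)),
            hsw, sR]
        · intro h
          rw [hsplit] at h
          have h2 := (List.append_inj h rfl).2
          exact nR (List.cons_injective h2) |>.elim

end StmtAux

/-- there are no uniquely sorted permutations of even (positive) length. -/
theorem stmt1 (n : ℕ) (hn : 0 < n) (hev : Even n) :
    ¬ ∃ π : List ℕ, InSn n π ∧ fertility n π = 1 := by
  rintro ⟨π, _, hfert⟩
  obtain ⟨a, ha⟩ := Set.ncard_eq_one.1 hfert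
  have haS : a ∈ {σ : List ℕ | InSn n σ ∧ stackSort σ = π} := by rw [ha]; rfl
  obtain ⟨haIn, haSort⟩ := haS
  have haP : a.Perm (List.range' 1 n) := haIn
  have hlen : a.length = n := by rw [haP.length_eq, List.length_range']
  have hnd : a.Nodup := haP.nodup_iff.2 (List.nodup_range' (s := 1) (n := n))
  have hne : a ≠ [] := by
    intro h; rw [h] at hlen; simp at hlen; omega
  obtain ⟨hperm, hsort, hneq⟩ :=
    StmtAux.main a.length a le_rfl hnd hne (by rw [hlen]; exact hev)
  have hmem : StmtAux.myInv a ∈ {σ : List ℕ | InSn n σ ∧ stackSort σ = π} :=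
    ⟨hperm.trans haP, hsort.trans haSort⟩
  rw [ha] at hmem
  exact hneq hmem
end

section
/- For every n ≥ 1, every sorted permutation in S_n has at most ⌊(n−1)/2⌋ descents, and there exists a sorted permutation in S_n with exactly ⌊(n−1)/2⌋ descents. Hence the maximum number of descents of a sorted permutation of length n is ⌊(n−1)/2⌋. -/
open scoped BigOperators

-- basic max lemmas
lemma foldr_max_le {w : List ℕ} {M : ℕ} (h : ∀ x ∈ w, x ≤ M) : w.foldr max 0 ≤ M := by
  induction w with
  | nil => simp
  | cons a t ih =>
    simp only [List.foldr_cons, max_le_iff]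
    exact ⟨h a (by simp), ih fun x hx => h x (by simp [hx])⟩

lemma le_foldr_max {w : List ℕ} {x : ℕ} (h : x ∈ w) : x ≤ w.foldr max 0 := by
  induction w with
  | nil => simp at h
  | cons a t ih =>
    rcases List.mem_cons.1 h with rfl | h
    · simp
    · exact le_trans (ih h) (by simp)

lemma foldr_max_mem {w : List ℕ} (h : w ≠ []) : w.foldr max 0 ∈ w := by
  induction w with
  | nil => simp at h
  | cons a t ih =>
    rcases eq_or_ne t [] with rfl | ht
    · simp
    · rcases max_cases a (t.foldr max 0) with ⟨h1, _⟩ | ⟨h1, _⟩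
      · simp [h1]
      · simp only [List.foldr_cons, h1]
        exact List.mem_cons_of_mem _ (ih ht)

lemma sF_nil (f : ℕ) : stackSortFuel f [] = [] := by cases f <;> simp [stackSortFuel]

lemma dropWhile_max_ne_nil {w : List ℕ} (h : w ≠ []) :
    w.dropWhile (fun x => x != w.foldr max 0) ≠ [] := by
  intro hc
  have := List.dropWhile_eq_nil_iff.1 hc _ (foldr_max_mem h)
  simp at this

lemma twdw_len (p : ℕ → Bool) (w : List ℕ) :
    (w.takeWhile p).length + (w.dropWhile p).length = w.length := by
  rw [← List.length_append, List.takeWhile_append_dropWhile]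

lemma sF_eq_of_le : ∀ (k : ℕ) (w : List ℕ) (f g : ℕ), w.length ≤ k → w.length ≤ f →
    w.length ≤ g → stackSortFuel f w = stackSortFuel g w := by
  intro k
  induction k with
  | zero => intro w f g hk _ _; rw [List.length_eq_zero_iff.1 (Nat.le_zero.1 hk)]; simp [sF_nil]
  | succ k ih =>
    intro w f g hk hf hg
    rcases eq_or_ne w [] with rfl | hw
    · simp [sF_nil]
    have hl : 1 ≤ w.length := List.length_pos_iff.2 hw
    obtain ⟨f', rfl⟩ : ∃ f', f = f' + 1 := ⟨f - 1, by omega⟩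
    obtain ⟨g', rfl⟩ : ∃ g', g = g' + 1 := ⟨g - 1, by omega⟩
    simp only [stackSortFuel, hw, if_false]
    have hdw := dropWhile_max_ne_nil hw
    have hlen := twdw_len (fun x => x != w.foldr max 0) w
    have hdl : 1 ≤ (w.dropWhile (fun x => x != w.foldr max 0)).length := List.length_pos_iff.2 hdw
    have htl : (w.takeWhile (fun x => x != w.foldr max 0)).length ≤ w.length - 1 := by omega
    have hrl : ((w.dropWhile (fun x => x != w.foldr max 0)).tail).length ≤ w.length - 1 := by
      rw [List.length_tail]; omega
    rw [ih _ f' g' (by omega) (by omega) (by omega), ih _ f' g' (by omega) (by omega) (by omega)]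

lemma sF_eq_stackSort {w : List ℕ} {f : ℕ} (h : w.length ≤ f) :
    stackSortFuel f w = stackSort w :=
  sF_eq_of_le w.length w f w.length le_rfl h le_rfl

lemma sF_subset : ∀ (f : ℕ) (w : List ℕ) (x : ℕ), x ∈ stackSortFuel f w → x ∈ w := by
  intro f
  induction f with
  | zero => intro w x hx; simp [stackSortFuel] at hx
  | succ f ih =>
    intro w x hx
    rcases eq_or_ne w [] with rfl | hw
    · simp [sF_nil] at hx
    simp only [stackSortFuel, hw, if_false, List.mem_append, List.mem_singleton] at hx
    rcases hx with (hx | hx) | rfl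
    · exact (List.takeWhile_sublist _).subset (ih _ _ hx)
    · exact (List.dropWhile_sublist _).subset (List.tail_sublist _ |>.subset (ih _ _ hx))
    · exact foldr_max_mem hw

def desL : List ℕ → ℕ
  | a :: b :: t => (if b < a then 1 else 0) + desL (b :: t)
  | _ => 0

lemma desL_nil : desL [] = 0 := rfl
lemma desL_single (a : ℕ) : desL [a] = 0 := rfl
lemma desL_cons2 (a b : ℕ) (t : List ℕ) :
    desL (a :: b :: t) = (if b < a then 1 else 0) + desL (b :: t) := rfl

lemma desL_split : ∀ (A : List ℕ) (b : ℕ) (C : List ℕ),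
    desL (A ++ b :: C) = desL (A ++ [b]) + desL (b :: C) := by
  intro A
  induction A with
  | nil => intro b C; simp [desL_single]
  | cons a A ih =>
    intro b C
    cases A with
    | nil => simp [desL_cons2, desL_single]
    | cons a' A' =>
      simp only [List.cons_append, desL_cons2] at *
      rw [ih]
      ring

lemma desL_snoc_le : ∀ (w : List ℕ) (x : ℕ), desL (w ++ [x]) ≤ desL w + 1 := by
  intro w
  induction w with
  | nil => intro x; simp [desL_single, desL_nil]
  | cons a t ih =>
    intro x
    cases t with
    | nil => simp [desL_cons2, desL_single, desL_nil]; split <;> omega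
    | cons b t' =>
      simp only [List.cons_append, desL_cons2]
      have := ih x
      simp only [List.cons_append] at this
      omega

lemma desL_snoc_max : ∀ (w : List ℕ) (m : ℕ), (∀ y ∈ w, y ≤ m) → desL (w ++ [m]) = desL w := by
  intro w
  induction w with
  | nil => intro m _; rfl
  | cons a t ih =>
    intro m hm
    cases t with
    | nil =>
      simp only [List.cons_append, List.nil_append, desL_cons2, desL_single, desL_nil]
      have : ¬ m < a := not_lt.2 (hm a (by simp))
      simp [this]
    | cons b t' =>
      simp only [List.cons_append, desL_cons2]
      have := ih m (fun y hy => hm y (List.mem_cons_of_mem _ hy))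
      simp only [List.cons_append] at this
      omega

lemma desL_map {f : ℕ → ℕ} (hf : StrictMono f) : ∀ (w : List ℕ), desL (w.map f) = desL w := by
  intro w
  induction w with
  | nil => rfl
  | cons a t ih =>
    cases t with
    | nil => rfl
    | cons b t' =>
      simp only [List.map_cons, desL_cons2] at *
      simp only [ih, hf.lt_iff_lt]

lemma descents_card_eq : ∀ (π : List ℕ), (descents π).card = desL π
  | [] => by simp [descents, desL_nil]
  | [a] => by simp [descents, desL_single]
  | a :: b :: t => by
    have ih := descents_card_eq (b :: t)
    have himg : descents (a :: b :: t) =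
        (if b < a then {1} else ∅) ∪ (descents (b :: t)).image (· + 1) := by
      ext i
      simp only [descents, Finset.mem_filter, Finset.mem_Icc, Finset.mem_union,
        Finset.mem_image, List.length_cons]
      simp only [entry]
      match i with
      | 0 =>
        constructor
        · rintro ⟨⟨h, -⟩, -⟩; exact absurd h (by omega)
        · rintro (h | ⟨d, -, hd⟩)
          · split at h <;> simp at h
          · omega
      | 1 =>
        rw [show (a::b::t).getD (1+1-1) 0 = b from rfl,
          show (a::b::t).getD (1-1) 0 = a from rfl]
        constructor
        · rintro ⟨-, h⟩
          exact Or.inl (by simp [h])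
        · rintro (h | ⟨d, ⟨⟨hd1, -⟩, -⟩, hd⟩)
          · refine ⟨⟨le_rfl, by omega⟩, ?_⟩
            split at h <;> simp at h <;> omega
          · omega
      | (j+2) =>
        simp only [show j+2-1 = j+1 from rfl, show j+2+1-1 = j+2 from rfl,
          List.getD_cons_succ]
        constructor
        · rintro ⟨⟨-, h2⟩, h⟩
          refine Or.inr ⟨j+1, ⟨⟨by omega, by omega⟩, ?_⟩, by omega⟩
          simpa using h
        · rintro (h | ⟨d, ⟨⟨hd1, hd2⟩, hd3⟩, hd⟩)
          · split at h <;> simp at h <;> omega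
          · obtain rfl : d = j+1 := by omega
            refine ⟨⟨by omega, by omega⟩, ?_⟩
            simpa using hd3
    have hdisj : Disjoint (if b < a then ({1} : Finset ℕ) else ∅)
        ((descents (b :: t)).image (· + 1)) := by
      intro s hs1 hs2 x hx
      have h1 := hs1 hx
      have h2 := hs2 hx
      simp only [Finset.mem_image] at h2
      obtain ⟨d, hd, rfl⟩ := h2
      have : 1 ≤ d := by
        simp only [descents, Finset.mem_filter, Finset.mem_Icc] at hd
        exact hd.1.1
      split at h1 <;> simp at h1 <;> omega
    rw [himg, Finset.card_union_of_disjoint hdisj, Finset.card_image_of_injective _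
      (add_left_injective 1), ih, desL_cons2]
    split <;> simp

lemma sF_ne_nil {w : List ℕ} {f : ℕ} (hw : w ≠ []) (hf : 1 ≤ f) :
    stackSortFuel f w ≠ [] := by
  obtain ⟨f', rfl⟩ : ∃ f', f = f' + 1 := ⟨f - 1, by omega⟩
  simp [stackSortFuel, hw]

lemma desL_bound : ∀ (k : ℕ) (w : List ℕ) (f : ℕ), w.length ≤ k → w.length ≤ f →
    desL (stackSortFuel f w) ≤ (w.length - 1) / 2 := by
  intro k
  induction k with
  | zero =>
    intro w f hk _
    rw [List.length_eq_zero_iff.1 (Nat.le_zero.1 hk), sF_nil]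
    simp [desL_nil]
  | succ k ih =>
    intro w f hk hf
    rcases eq_or_ne w [] with rfl | hw
    · simp [sF_nil, desL_nil]
    have hl : 1 ≤ w.length := List.length_pos_iff.2 hw
    obtain ⟨f', rfl⟩ : ∃ f', f = f' + 1 := ⟨f - 1, by omega⟩
    simp only [stackSortFuel, hw, if_false]
    set m := w.foldr max 0 with hm
    set L := w.takeWhile (fun x => x != m) with hL
    set R := (w.dropWhile (fun x => x != m)).tail with hR
    have hdw := dropWhile_max_ne_nil hw
    have hlen : L.length + (w.dropWhile (fun x => x != m)).length = w.length := by
      rw [hL]; exact twdw_len _ w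
    have hdl : 1 ≤ (w.dropWhile (fun x => x != m)).length := List.length_pos_iff.2 hdw
    have haux : R.length = (w.dropWhile (fun x => x != m)).length - 1 := by
      rw [hR, List.length_tail]
    have hLl : L.length ≤ w.length - 1 := by omega
    have hRl : R.length ≤ w.length - 1 := by omega
    have hmax : ∀ y ∈ stackSortFuel f' L ++ stackSortFuel f' R, y ≤ m := by
      intro y hy
      rcases List.mem_append.1 hy with hy | hy
      · exact le_foldr_max ((List.takeWhile_sublist _).subset (sF_subset _ _ _ hy))
      · exact le_foldr_max ((List.dropWhile_sublist _).subset
          ((List.tail_sublist _).subset (sF_subset _ _ _ hy)))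
    rw [desL_snoc_max _ m hmax]
    have hbL := ih L f' (by omega) (by omega)
    have hbR := ih R f' (by omega) (by omega)
    rcases eq_or_ne L [] with hLnil | hLne
    · have h0 : L.length = 0 := by rw [hLnil]; rfl
      rw [hLnil, sF_nil, List.nil_append]
      omega
    rcases eq_or_ne R [] with hRnil | hRne
    · rw [hRnil, sF_nil, List.append_nil]
      omega
    have hLpos : 1 ≤ L.length := List.length_pos_iff.2 hLne
    have hRpos : 1 ≤ R.length := List.length_pos_iff.2 hRne
    have hsR : stackSortFuel f' R ≠ [] := sF_ne_nil hRne (by omega)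
    obtain ⟨y, C, hyC⟩ := List.exists_cons_of_ne_nil hsR
    rw [hyC, desL_split]
    have h1 : desL (stackSortFuel f' L ++ [y]) ≤ desL (stackSortFuel f' L) + 1 :=
      desL_snoc_le _ _
    rw [← hyC] at *
    omega

lemma foldr_max_eq {w : List ℕ} {M : ℕ} (hM : M ∈ w) (h : ∀ x ∈ w, x ≤ M) :
    w.foldr max 0 = M :=
  le_antisymm (foldr_max_le h) (le_foldr_max hM)

lemma takeWhile_all {p : ℕ → Bool} : ∀ {A : List ℕ} {l : List ℕ}, (∀ x ∈ A, p x = true) →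
    List.takeWhile p (A ++ l) = A ++ List.takeWhile p l := by
  intro A
  induction A with
  | nil => intro l _; simp
  | cons a A ih =>
    intro l h
    rw [List.cons_append, List.takeWhile_cons, h a (by simp), if_pos rfl, ih
      (fun x hx => h x (by simp [hx])), List.cons_append]

lemma dropWhile_all {p : ℕ → Bool} : ∀ {A : List ℕ} {l : List ℕ}, (∀ x ∈ A, p x = true) →
    List.dropWhile p (A ++ l) = List.dropWhile p l := by
  intro A
  induction A with
  | nil => intro l _; simp
  | cons a A ih =>
    intro l h
    rw [List.cons_append, List.dropWhile_cons, if_pos (h a (by simp)),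
      ih (fun x hx => h x (by simp [hx]))]

lemma stackSort_snoc2 {A : List ℕ} {M r : ℕ} (hA : ∀ x ∈ A, x < M) (hr : r < M) :
    stackSort (A ++ [M, r]) = stackSort A ++ [r, M] := by
  have hmem : M ∈ A ++ [M, r] := by simp
  have hle : ∀ x ∈ A ++ [M, r], x ≤ M := by
    intro x hx
    rcases List.mem_append.1 hx with hx | hx
    · exact (hA x hx).le
    · simp only [List.mem_cons, List.mem_singleton] at hx
      rcases hx with rfl | rfl | h
      · exact le_rfl
      · exact hr.le
      · simp at h
  have hmax : (A ++ [M, r]).foldr max 0 = M := foldr_max_eq hmem hle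
  have hAp : ∀ x ∈ A, (x != M) = true := by
    intro x hx
    simp [bne_iff_ne]
    exact (hA x hx).ne
  have htw : (A ++ [M, r]).takeWhile (fun x => x != M) = A := by
    rw [takeWhile_all hAp, List.takeWhile_cons]
    simp
  have hdw : (A ++ [M, r]).dropWhile (fun x => x != M) = [M, r] := by
    rw [dropWhile_all hAp, List.dropWhile_cons]
    simp
  have hlen : (A ++ [M, r]).length = A.length + 2 := by simp
  rw [stackSort, hlen]
  rw [show stackSortFuel (A.length + 2) (A ++ [M, r]) =
      stackSortFuel (A.length + 1) ((A ++ [M, r]).takeWhile (fun x => x != (A ++ [M, r]).foldr max 0)) ++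
      stackSortFuel (A.length + 1) (((A ++ [M, r]).dropWhile (fun x => x != (A ++ [M, r]).foldr max 0)).tail) ++
      [(A ++ [M, r]).foldr max 0] from by
    simp only [stackSortFuel]
    rw [if_neg (by simp)]]
  rw [hmax, htw, hdw]
  have h1 : stackSortFuel (A.length + 1) A = stackSort A := sF_eq_stackSort (by omega)
  have h2 : stackSortFuel (A.length + 1) [M, r].tail = [r] := by
    show stackSortFuel (A.length + 1) [r] = [r]
    have : stackSortFuel (A.length + 1) [r] = stackSort [r] := sF_eq_stackSort (by simp)
    rw [this, stackSort]
    simp [stackSortFuel]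
  rw [h1, h2]
  simp

lemma foldr_max_map {f : ℕ → ℕ} (hf : Monotone f) (h0 : f 0 = 0) (w : List ℕ) :
    (w.map f).foldr max 0 = f (w.foldr max 0) := by
  induction w with
  | nil => simp [h0]
  | cons a t ih => simp [ih, hf.map_max]

lemma sF_map {f : ℕ → ℕ} (hf : StrictMono f) (h0 : f 0 = 0) :
    ∀ (fuel : ℕ) (w : List ℕ), stackSortFuel fuel (w.map f) = (stackSortFuel fuel w).map f := by
  intro fuel
  induction fuel with
  | zero => intro w; simp [stackSortFuel]
  | succ fuel ih =>
    intro w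
    rcases eq_or_ne w [] with rfl | hw
    · simp [sF_nil]
    have hw' : w.map f ≠ [] := by simp [hw]
    simp only [stackSortFuel, hw, hw', if_false]
    rw [foldr_max_map hf.monotone h0]
    have hpeq : (fun x => x != f (w.foldr max 0)) ∘ f = fun x => x != w.foldr max 0 := by
      funext x
      simp only [Function.comp_apply]
      rw [Bool.eq_iff_iff]
      simp [bne_iff_ne, hf.injective.ne_iff]
    rw [List.takeWhile_map, List.dropWhile_map, hpeq, ← List.map_tail, ih, ih]
    simp

def fk (n x : ℕ) : ℕ := if x < n then x else x + 1

lemma fk_strictMono {n : ℕ} : StrictMono (fk n) := by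
  intro x y h
  unfold fk
  split_ifs <;> omega

lemma fk_zero {n : ℕ} (hn : 1 ≤ n) : fk n 0 = 0 := by simp [fk]; omega

def sigL : ℕ → List ℕ
  | 0 => []
  | 1 => [1]
  | 2 => [1, 2]
  | (n+3) => (sigL (n+1)).map (fk (n+1)) ++ [n+3, n+1]

def piL : ℕ → List ℕ
  | 0 => []
  | 1 => [1]
  | 2 => [1, 2]
  | (n+3) => (piL (n+1)).map (fk (n+1)) ++ [n+1, n+3]

lemma map_fk_range {k : ℕ} (hk : 1 ≤ k) :
    (List.range' 1 k).map (fk k) = List.range' 1 (k-1) ++ [k+1] := by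
  have h1 : List.range' 1 k = List.range' 1 (k-1) ++ [k] := by
    conv_lhs => rw [show k = (k-1) + 1 by omega]
    rw [List.range'_concat]
    congr 1
    simp
    omega
  have hid : (List.range' 1 (k-1)).map (fk k) = List.range' 1 (k-1) := by
    have h2 : ∀ x ∈ List.range' 1 (k-1), fk k x = id x := by
      intro x hx
      have := List.mem_range'_1.1 hx
      simp only [fk, id_eq]
      rw [if_pos (by omega)]
    rw [List.map_congr_left h2, List.map_id]
  rw [h1, List.map_append, hid]
  congr 1
  simp [fk]

lemma perm_step {k : ℕ} (hk : 1 ≤ k) {w : List ℕ} (hw : w.Perm (List.range' 1 k))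
    {t2 : List ℕ} (ht : t2.Perm [k, k+2]) :
    (w.map (fk k) ++ t2).Perm (List.range' 1 (k+2)) := by
  have h1 : (w.map (fk k) ++ t2).Perm ((List.range' 1 (k-1) ++ [k+1]) ++ t2) := by
    refine List.Perm.append_right t2 ?_
    rw [← map_fk_range hk]
    exact hw.map _
  have h2 : List.range' 1 (k+2) = List.range' 1 (k-1) ++ ([k] ++ [k+1] ++ [k+2]) := by
    have e1 : List.range' 1 (k+2) = List.range' 1 (k+1) ++ [k+2] := by
      rw [List.range'_concat]; congr 1; simp; omega
    have e2 : List.range' 1 (k+1) = List.range' 1 k ++ [k+1] := by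
      rw [List.range'_concat]; congr 1; simp; omega
    have e3 : List.range' 1 k = List.range' 1 (k-1) ++ [k] := by
      conv_lhs => rw [show k = (k-1) + 1 by omega]
      rw [List.range'_concat]; congr 1; simp; omega
    rw [e1, e2, e3]
    simp [List.append_assoc]
  refine h1.trans ?_
  rw [h2, List.append_assoc]
  refine List.Perm.append_left _ ?_
  have h3 : ([k+1] ++ t2).Perm ([k+1] ++ [k, k+2]) := List.Perm.append_left _ ht
  refine h3.trans ?_
  show ((k+1) :: k :: [k+2]).Perm ([k] ++ [k+1] ++ [k+2])
  exact List.Perm.swap k (k+1) [k+2]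

lemma key : ∀ n : ℕ, 1 ≤ n →
    (sigL n).Perm (List.range' 1 n) ∧ (piL n).Perm (List.range' 1 n) ∧
    stackSort (sigL n) = piL n ∧ desL (piL n) = (n-1)/2 ∧ ∃ Q, piL n = Q ++ [n]
  | 0, h => absurd h (by omega)
  | 1, _ => by
    exact ⟨by decide, by decide, by decide, rfl, ⟨[], rfl⟩⟩
  | 2, _ => by
    exact ⟨by decide, by decide, by decide, rfl, ⟨[1], rfl⟩⟩
  | (n+3), _ => by
    obtain ⟨hs, hp, hss, hd, Q, hQ⟩ := key (n+1) (by omega)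
    set k := n + 1 with hkdef
    have hk : 1 ≤ k := by omega
    have hsig : sigL (n+3) = (sigL k).map (fk k) ++ [k+2, k] := rfl
    have hpi : piL (n+3) = (piL k).map (fk k) ++ [k, k+2] := rfl
    have hkk : n + 3 = k + 2 := by omega
    refine ⟨?_, ?_, ?_, ?_, ?_⟩
    · rw [hsig, hkk]
      exact perm_step hk hs (List.Perm.swap k (k+2) [])
    · rw [hpi, hkk]
      exact perm_step hk hp (List.Perm.refl _)
    · rw [hsig, hpi]
      have hAlt : ∀ x ∈ (sigL k).map (fk k), x < k + 2 := by
        intro x hx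
        obtain ⟨y, hy, rfl⟩ := List.mem_map.1 hx
        have := List.mem_range'_1.1 (hs.mem_iff.1 hy)
        simp only [fk]
        split <;> omega
      rw [stackSort_snoc2 hAlt (by omega)]
      congr 1
      rw [stackSort, List.length_map, sF_map fk_strictMono (fk_zero hk), ← stackSort, hss]
    · rw [hpi, hQ, List.map_append]
      have hfkk : (fk k) k = k + 1 := by simp [fk]
      rw [List.map_singleton, hfkk]
      rw [List.append_assoc]
      rw [show ([k+1] ++ [k, k+2]) = (k+1) :: [k, k+2] from rfl]
      rw [desL_split]
      have e1 : desL ((k+1) :: [k, k+2]) = 1 := by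
        rw [show (k+1) :: [k, k+2] = [k+1, k, k+2] from rfl, desL_cons2, desL_cons2,
          desL_single, if_pos (by omega), if_neg (by omega)]
      have e2 : desL (Q.map (fk k) ++ [k+1]) = (k-1)/2 := by
        rw [show ([k+1] : List ℕ) = [fk k k] from by rw [hfkk], ← List.map_singleton (f := fk k),
          ← List.map_append, ← hQ, desL_map fk_strictMono, hd]
      rw [e1, e2]
      omega
    · exact ⟨(piL k).map (fk k) ++ [k], by rw [hpi, List.append_assoc]; rfl⟩


/-- the maximum number of descents of a sorted permutation of length `n`
is `⌊(n−1)/2⌋`. -/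
theorem stmt2 (n : ℕ) (hn : 1 ≤ n) :
    (∀ π : List ℕ, InSn n π → 0 < fertility n π → (descents π).card ≤ (n - 1) / 2) ∧
    (∃ π : List ℕ, InSn n π ∧ 0 < fertility n π ∧ (descents π).card = (n - 1) / 2) := by
  constructor
  · intro π hπ hfert
    have hne : ({σ : List ℕ | InSn n σ ∧ stackSort σ = π}).Nonempty :=
      Set.nonempty_of_ncard_ne_zero (Nat.pos_iff_ne_zero.mp hfert)
    obtain ⟨σ, hσ1, hσ2⟩ := hne
    have hlen : σ.length = n := by
      rw [List.Perm.length_eq hσ1, List.length_range']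
    rw [descents_card_eq, ← hσ2, stackSort]
    have hb := desL_bound σ.length σ σ.length le_rfl le_rfl
    rwa [hlen] at hb ⊢
  · obtain ⟨hs, hp, hss, hd, -⟩ := key n hn
    refine ⟨piL n, hp, ?_, ?_⟩
    · have hfin : ({σ : List ℕ | InSn n σ ∧ stackSort σ = piL n}).Finite := by
        apply Set.Finite.subset (List.finite_toSet (List.range' 1 n).permutations)
        intro σ hσ
        simp only [Set.mem_setOf_eq] at hσ
        exact List.mem_permutations.2 hσ.1
      exact (Set.ncard_pos hfin).2 ⟨sigL n, hs, hss⟩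
    · rw [descents_card_eq]
      exact hd
end

section
/- Let H be a valid hook configuration of a permutation π ∈ S_n, and consider the coloring of the plot of π induced by H. If i_1 < ⋯ < i_r are indices such that the points (i_1, π_{i_1}), …, (i_r, π_{i_r}) are all colored (i.e., none is a northeast endpoint of a hook) and all receive the same color, then π_{i_1} < ⋯ < π_{i_r}. -/
open scoped BigOperators

lemma entry_ne_of_ne (n : ℕ) (π : List ℕ) (hπ : InSn n π) {a b : ℕ}
    (ha1 : 1 ≤ a) (ha2 : a ≤ π.length) (hb1 : 1 ≤ b) (hb2 : b ≤ π.length)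
    (hab : a ≠ b) : entry π a ≠ entry π b := by
  have hnd : π.Nodup := hπ.nodup_iff.mpr (List.nodup_range' ..)
  have ha : a - 1 < π.length := by omega
  have hb : b - 1 < π.length := by omega
  intro he
  have he' : π[a-1] = π[b-1] := by
    rw [← List.getD_eq_getElem π 0 ha, ← List.getD_eq_getElem π 0 hb]
    exact he
  have := (List.Nodup.getElem_inj_iff hnd).mp he'
  omega

lemma same_color_increasing (n : ℕ) (π : List ℕ) (H : List (ℕ × ℕ))
    (hπ : InSn n π) (hH : IsVHC π H) (m m' : ℕ)
    (hm : ColoredPoint π H m) (hm' : ColoredPoint π H m')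
    (hlt : m < m') (hs : SameColor π H m m') : entry π m < entry π m' := by
  obtain ⟨hdesc, hhook, hcond2, hcond4⟩ := hH
  obtain ⟨hm1, hm2, hmne⟩ := hm
  obtain ⟨hm'1, hm'2, hm'ne⟩ := hm'
  by_contra hge
  have hne : entry π m ≠ entry π m' :=
    entry_ne_of_ne n π hπ hm1 hm2 hm'1 hm'2 (by omega)
  have hgt : entry π m' < entry π m := by omega
  -- the finset of positions in [m, m'-1] whose entry is at least entry π m
  set S := (Finset.Icc m (m' - 1)).filter (fun i => entry π m ≤ entry π i) with hS
  have hmS : m ∈ S :=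
    Finset.mem_filter.mpr ⟨Finset.mem_Icc.mpr ⟨le_refl m, by omega⟩, le_refl _⟩
  have hSne : S.Nonempty := ⟨m, hmS⟩
  set d := S.max' hSne with hd
  have hdS : d ∈ S := S.max'_mem hSne
  have hdle : ∀ i ∈ S, i ≤ d := fun i hi => S.le_max' i hi
  have hdIcc : m ≤ d ∧ d ≤ m' - 1 := by
    have := Finset.mem_filter.mp hdS
    simpa [Finset.mem_Icc] using this.1
  have hdent : entry π m ≤ entry π d := (Finset.mem_filter.mp hdS).2
  -- d is a descent
  have hd1 : entry π (d + 1) < entry π m := by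
    by_cases hcase : d + 1 = m'
    · rw [hcase]; exact hgt
    · by_contra hle
      push_neg at hle
      have hmem : d + 1 ∈ S := by
        simp only [hS, Finset.mem_filter, Finset.mem_Icc]
        exact ⟨⟨by omega, by omega⟩, hle⟩
      have := hdle _ hmem
      omega
  have hddesc : d ∈ descents π := by
    simp only [descents, Finset.mem_filter, Finset.mem_Icc]
    exact ⟨⟨by omega, by omega⟩, lt_of_lt_of_le hd1 hdent⟩
  -- the hook h' with southwest endpoint at d
  have hdmap : d ∈ H.map Prod.fst := by
    rw [hdesc]; exact (Finset.mem_sort (α := ℕ) (· ≤ ·)).mpr hddesc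
  obtain ⟨h', hh'H, hh'1⟩ := List.mem_map.mp hdmap
  obtain ⟨hh'a, hh'b, hh'c, hh'd⟩ := hhook h' hh'H
  rw [hh'1] at hh'b hh'd
  have hjgt : entry π m < entry π h'.2 := lt_of_le_of_lt hdent hh'd
  -- the northeast endpoint of h' is strictly to the right of m'
  have hjm' : m' < h'.2 := by
    rcases lt_trichotomy h'.2 m' with hlt2 | heq | hgt2
    · exfalso
      have hmem : h'.2 ∈ S := by
        simp only [hS, Finset.mem_filter, Finset.mem_Icc]
        exact ⟨⟨by omega, by omega⟩, le_of_lt hjgt⟩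
      have := hdle _ hmem
      omega
    · exact absurd heq (hm'ne h' hh'H)
    · exact hgt2
  have hcand' : CandidateHook π H m' h' :=
    ⟨hh'H, by omega, hjm', lt_trans hgt hjgt, by omega⟩
  rcases hs with ⟨_, hsky'⟩ | ⟨h, hLm, hLm'⟩
  · exact hsky' h' hcand'
  · obtain ⟨⟨hhH, hh1m, hmh2, hentm, hh1ne⟩, _⟩ := hLm
    obtain ⟨⟨_, _, hm'h2, _, _⟩, hlow'⟩ := hLm'
    have hle2 : entry π h.2 ≤ entry π h'.2 := hlow' h' hcand'
    have hdh2 : entry π d ≤ entry π h.2 := by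
      have := hcond2 h hhH d (by omega) (by omega)
      omega
    have hne' : h ≠ h' := by
      intro heq
      rw [← heq] at hh'1
      omega
    have hint : (hookPoints π h ∩ hookPoints π h').Nonempty := by
      refine ⟨(d, entry π h.2), Or.inr ⟨by omega, by omega, rfl⟩,
        Or.inl ⟨hh'1.symm, ?_, hle2⟩⟩
      rw [hh'1]; exact hdh2
    rcases hcond4 h hhH h' hh'H hne' hint with hc | hc
    · omega
    · omega

/-- if points in positions `i_1 < ⋯ < i_r` are all colored and receive the same
color in the coloring induced by a valid hook configuration, then their values increase. -/
theorem stmt5 (n : ℕ) (π : List ℕ) (H : List (ℕ × ℕ))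
    (hπ : InSn n π) (hH : IsVHC π H)
    (r : ℕ) (idx : Fin r → ℕ) (hmono : StrictMono idx)
    (hcol : ∀ t, ColoredPoint π H (idx t))
    (hsame : ∀ t t', SameColor π H (idx t) (idx t')) :
    StrictMono (fun t => entry π (idx t)) := by
  intro t t' htt'
  exact same_color_increasing n π H hπ hH (idx t) (idx t')
    (hcol t) (hcol t') (hmono htt') (hsame t t')
end

section
/- For every k ≥ 0 and every ℓ ∈ {1,…,2k+1}, |M̃_ℓ^c(2k+2)| = |M̃_{2k+2−ℓ}^c(2k+2)|, where M̃_ℓ^c(2k+2) denotes the set of pairs (ρ, α) ∈ M̃^c(2k+2) such that {ℓ, 2k+2} is a block of ρ. -/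
open scoped BigOperators

namespace Stmt12Aux

/-- The reflection `i ↦ n - i` on `{1, …, n-1}`, fixing `n`. -/
def g (n i : ℕ) : ℕ := if i = n then n else n - i

lemma g_mem {n i : ℕ} (h : i ∈ Finset.Icc 1 n) : g n i ∈ Finset.Icc 1 n := by
  simp only [Finset.mem_Icc] at *
  unfold g; split <;> omega

lemma g_g {n i : ℕ} (h : i ∈ Finset.Icc 1 n) : g n (g n i) = i := by
  simp only [Finset.mem_Icc] at h
  unfold g; split_ifs <;> omega

lemma g_inj {n a b : ℕ} (ha : a ∈ Finset.Icc 1 n) (hb : b ∈ Finset.Icc 1 n)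
    (h : g n a = g n b) : a = b := by
  rw [← g_g ha, ← g_g hb, h]

lemma im_subset {n : ℕ} {B : Finset ℕ} (h : B ⊆ Finset.Icc 1 n) :
    B.image (g n) ⊆ Finset.Icc 1 n := by
  intro x hx
  obtain ⟨a, ha, rfl⟩ := Finset.mem_image.1 hx
  exact g_mem (h ha)

lemma im_im {n : ℕ} {B : Finset ℕ} (h : B ⊆ Finset.Icc 1 n) :
    (B.image (g n)).image (g n) = B := by
  rw [Finset.image_image]
  have : Set.EqOn (g n ∘ g n) id (B : Set ℕ) := fun x hx => g_g (h hx)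
  rw [Finset.image_congr this, Finset.image_id]

lemma mem_n_im {n : ℕ} {B : Finset ℕ} (h : B ⊆ Finset.Icc 1 n) :
    n ∈ B.image (g n) ↔ n ∈ B := by
  constructor
  · intro hm
    obtain ⟨a, ha, hg⟩ := Finset.mem_image.1 hm
    have hab := Finset.mem_Icc.1 (h ha)
    have : a = n := by unfold g at hg; split_ifs at hg <;> omega
    exact this ▸ ha
  · intro hm
    exact Finset.mem_image.2 ⟨n, hm, by unfold g; simp⟩

lemma crosses_im {n : ℕ} {B B' : Finset ℕ} (hB : B ⊆ Finset.Icc 1 n)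
    (hB' : B' ⊆ Finset.Icc 1 n) (h : Crosses B B') :
    Crosses (B.image (g n)) (B'.image (g n)) ∨
      Crosses (B'.image (g n)) (B.image (g n)) := by
  obtain ⟨i, hi, kk, hk, j, hj, l, hl, hij, hjk, hkl⟩ := h
  have hi' := Finset.mem_Icc.1 (hB hi)
  have hk' := Finset.mem_Icc.1 (hB hk)
  have hj' := Finset.mem_Icc.1 (hB' hj)
  have hl' := Finset.mem_Icc.1 (hB' hl)
  by_cases hln : l = n
  · left
    refine ⟨g n kk, Finset.mem_image_of_mem _ hk, g n i, Finset.mem_image_of_mem _ hi,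
      g n j, Finset.mem_image_of_mem _ hj, g n l, Finset.mem_image_of_mem _ hl, ?_, ?_, ?_⟩ <;>
      (unfold g; split_ifs <;> omega)
  · right
    refine ⟨g n l, Finset.mem_image_of_mem _ hl, g n j, Finset.mem_image_of_mem _ hj,
      g n kk, Finset.mem_image_of_mem _ hk, g n i, Finset.mem_image_of_mem _ hi, ?_, ?_, ?_⟩ <;>
      (unfold g; split_ifs <;> omega)

lemma crossEdge_im {n : ℕ} {B B' : Finset ℕ} (hB : B ⊆ Finset.Icc 1 n)
    (hB' : B' ⊆ Finset.Icc 1 n) (h : CrossEdge B B') :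
    CrossEdge (B.image (g n)) (B'.image (g n)) := by
  constructor
  · intro he
    apply h.1
    have := congrArg (Finset.image (g n)) he
    rwa [im_im hB, im_im hB'] at this
  · rcases h.2 with hc | hc
    · exact crosses_im hB hB' hc
    · exact (crosses_im hB' hB hc).symm

lemma block_subset {n : ℕ} {ρ : Finset (Finset ℕ)} (hρ : IsPartitionOf n ρ)
    {B : Finset ℕ} (hB : B ∈ ρ) : B ⊆ Finset.Icc 1 n := by
  intro x hx
  rw [← hρ.2.2]
  exact Finset.mem_sup.2 ⟨B, hB, hx⟩

/-- The reflection map on pairs `(ρ, d)`. -/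
def Fm (n : ℕ) (p : Finset (Finset ℕ) × (Finset ℕ → Finset ℕ → Prop)) :
    Finset (Finset ℕ) × (Finset ℕ → Finset ℕ → Prop) :=
  (p.1.image (fun B => B.image (g n)),
   fun B B' => B ∈ p.1.image (fun B => B.image (g n)) ∧
     B' ∈ p.1.image (fun B => B.image (g n)) ∧ p.2 (B.image (g n)) (B'.image (g n)))

lemma Fm_mem {n : ℕ} {p : Finset (Finset ℕ) × (Finset ℕ → Finset ℕ → Prop)}
    (hp : p ∈ MtildeC n) : Fm n p ∈ MtildeC n := by
  obtain ⟨⟨h1, h2, h3, h4, h5, h6, h7⟩, hm⟩ := hp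
  have sub : ∀ B ∈ p.1, B ⊆ Finset.Icc 1 n := fun B hB => block_subset h1 hB
  set ρ' := p.1.image (fun B => B.image (g n)) with hρ'
  have hback : ∀ B ∈ ρ', B.image (g n) ∈ p.1 ∧ (B.image (g n)).image (g n) = B := by
    intro B hB
    obtain ⟨C, hC, rfl⟩ := Finset.mem_image.1 hB
    rw [im_im (sub C hC)]
    exact ⟨hC, rfl⟩
  have sub' : ∀ B ∈ ρ', B ⊆ Finset.Icc 1 n := by
    intro B hB
    obtain ⟨C, hC, rfl⟩ := Finset.mem_image.1 hB
    exact im_subset (sub C hC)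
  have hpart : IsPartitionOf n ρ' := by
    refine ⟨?_, ?_, ?_⟩
    · intro B hB
      obtain ⟨C, hC, rfl⟩ := Finset.mem_image.1 hB
      exact (h1.1 C hC).image _
    · intro B hB B' hB' hne
      obtain ⟨C, hC, rfl⟩ := Finset.mem_image.1 hB
      obtain ⟨C', hC', rfl⟩ := Finset.mem_image.1 hB'
      have hCC' : C ≠ C' := by rintro rfl; exact hne rfl
      have hd := h1.2.1 C hC C' hC' hCC'
      rw [Finset.disjoint_left]
      intro x hx hx'
      obtain ⟨a, ha, rfl⟩ := Finset.mem_image.1 hx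
      obtain ⟨b, hb, hba⟩ := Finset.mem_image.1 hx'
      have : b = a := g_inj (sub C' hC' hb) (sub C hC ha) hba
      exact Finset.disjoint_left.1 hd ha (this ▸ hb)
    · ext a
      simp only [Finset.mem_sup, id]
      constructor
      · rintro ⟨B, hB, ha⟩
        exact sub' B hB ha
      · intro ha
        have hga : g n a ∈ Finset.Icc 1 n := g_mem ha
        rw [← h1.2.2] at hga
        obtain ⟨C, hC, hgC⟩ := Finset.mem_sup.1 hga
        refine ⟨C.image (g n), Finset.mem_image_of_mem _ hC, ?_⟩
        have : g n (g n a) = a := g_g ha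
        exact this ▸ Finset.mem_image_of_mem _ hgC
  have hconn : (crossingGraph ρ').Connected := by
    let e : {B // B ∈ p.1} ≃ {B // B ∈ ρ'} :=
      { toFun := fun B => ⟨B.1.image (g n), Finset.mem_image_of_mem _ B.2⟩
        invFun := fun B => ⟨B.1.image (g n), (hback B.1 B.2).1⟩
        left_inv := fun B => Subtype.ext (im_im (sub _ B.2))
        right_inv := fun B => Subtype.ext (hback B.1 B.2).2 }
    have iso : crossingGraph p.1 ≃g crossingGraph ρ' :=
      { toEquiv := e
        map_rel_iff' := by
          intro B B'
          show CrossEdge (B.1.image (g n)) (B'.1.image (g n)) ↔ CrossEdge B.1 B'.1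
          constructor
          · intro h
            have hh := crossEdge_im (im_subset (sub _ B.2)) (im_subset (sub _ B'.2)) h
            rwa [im_im (sub _ B.2), im_im (sub _ B'.2)] at hh
          · exact crossEdge_im (sub _ B.2) (sub _ B'.2) }
    exact iso.connected_iff.1 h2
  refine ⟨⟨hpart, hconn, ?_, ?_, ?_, ?_, ?_⟩, ?_⟩
  · rintro B B' ⟨hB, hB', hd⟩
    refine ⟨hB, hB', ?_⟩
    have hc : CrossEdge (B.image (g n)) (B'.image (g n)) := (h3 _ _ hd).2.2
    have hc2 := crossEdge_im (im_subset (sub' _ hB)) (im_subset (sub' _ hB')) hc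
    rwa [im_im (sub' _ hB), im_im (sub' _ hB')] at hc2
  · intro B hB B' hB' hce
    have hc : CrossEdge (B.image (g n)) (B'.image (g n)) :=
      crossEdge_im (sub' _ hB) (sub' _ hB') hce
    rcases h4 _ (hback _ hB).1 _ (hback _ hB').1 hc with hd | hd
    · exact Or.inl ⟨hB, hB', hd⟩
    · exact Or.inr ⟨hB', hB, hd⟩
  · rintro B B' ⟨_, _, hd⟩ ⟨_, _, hd'⟩
    exact h5 _ _ hd hd'
  · intro B htg
    have : Relation.TransGen p.2 (B.image (g n)) (B.image (g n)) :=
      Relation.TransGen.lift (p := p.2) (fun B : Finset ℕ => B.image (g n))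
        (fun a b (hab : (Fm n p).2 a b) => hab.2.2) B B htg
    exact h6 _ this
  · intro B hB
    rw [← mem_n_im (sub' _ hB), ← h7 _ (hback _ hB).1]
    constructor
    · intro hall C hdC
      have hC : C ∈ p.1 := (h3 _ _ hdC).1
      apply hall (C.image (g n))
      refine ⟨Finset.mem_image_of_mem _ hC, hB, ?_⟩
      rwa [im_im (sub _ hC)]
    · intro hall B'' hd'
      exact hall _ hd'.2.2
  · intro B hB
    obtain ⟨C, hC, rfl⟩ := Finset.mem_image.1 hB
    rw [Finset.card_image_of_injOn (fun a ha b hb hab => g_inj (sub C hC ha) (sub C hC hb) hab)]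
    exact hm C hC

lemma Fm_invol {n : ℕ} {p : Finset (Finset ℕ) × (Finset ℕ → Finset ℕ → Prop)}
    (hp : p ∈ MtildeC n) : Fm n (Fm n p) = p := by
  obtain ⟨⟨h1, h2, h3, h4, h5, h6, h7⟩, hm⟩ := hp
  have sub : ∀ B ∈ p.1, B ⊆ Finset.Icc 1 n := fun B hB => block_subset h1 hB
  have hρ : (p.1.image (fun B => B.image (g n))).image (fun B => B.image (g n)) = p.1 := by
    rw [Finset.image_image]
    have : Set.EqOn ((fun B => Finset.image (g n) B) ∘ fun B => Finset.image (g n) B) id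
        (p.1 : Set (Finset ℕ)) := fun B hB => im_im (sub B hB)
    rw [Finset.image_congr this, Finset.image_id]
  have hd : (Fm n (Fm n p)).2 = p.2 := by
    funext B B'
    apply propext
    constructor
    · rintro ⟨hB, hB', hmid⟩
      show p.2 B B'
      simp only [Fm] at hB hB'
      rw [hρ] at hB hB'
      obtain ⟨_, _, hdd⟩ := hmid
      rwa [im_im (sub _ hB), im_im (sub _ hB')] at hdd
    · intro hdBB'
      have hB : B ∈ p.1 := (h3 _ _ hdBB').1
      have hB' : B' ∈ p.1 := (h3 _ _ hdBB').2.1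
      refine ⟨?_, ?_, Finset.mem_image_of_mem _ hB, Finset.mem_image_of_mem _ hB', ?_⟩
      · show B ∈ (p.1.image _).image _
        rw [hρ]; exact hB
      · show B' ∈ (p.1.image _).image _
        rw [hρ]; exact hB'
      · rwa [im_im (sub _ hB), im_im (sub _ hB')]
  exact Prod.ext hρ hd

lemma im_pair {n m : ℕ} (h1 : 1 ≤ m) (h2 : m < n) :
    ({m, n} : Finset ℕ).image (g n) = {n - m, n} := by
  rw [Finset.image_insert, Finset.image_singleton]
  unfold g
  rw [if_neg (by omega : m ≠ n), if_pos rfl]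

end Stmt12Aux

/-- `|M̃_ℓ^c(2k+2)| = |M̃_{2k+2−ℓ}^c(2k+2)|`. -/
theorem stmt12 (k l : ℕ) (h1 : 1 ≤ l) (h2 : l ≤ 2 * k + 1) :
    {p | p ∈ MtildeC (2 * k + 2) ∧ ({l, 2 * k + 2} : Finset ℕ) ∈ p.1}.ncard =
    {p | p ∈ MtildeC (2 * k + 2) ∧
      ({2 * k + 2 - l, 2 * k + 2} : Finset ℕ) ∈ p.1}.ncard := by
  classical
  set n := 2 * k + 2 with hn
  set S₁ : Set (Finset (Finset ℕ) × (Finset ℕ → Finset ℕ → Prop)) :=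
    {p | p ∈ MtildeC n ∧ ({l, n} : Finset ℕ) ∈ p.1} with hS₁
  set S₂ : Set (Finset (Finset ℕ) × (Finset ℕ → Finset ℕ → Prop)) :=
    {p | p ∈ MtildeC n ∧ ({n - l, n} : Finset ℕ) ∈ p.1} with hS₂
  have himg : Stmt12Aux.Fm n '' S₁ = S₂ := by
    apply Set.Subset.antisymm
    · rintro q ⟨p, ⟨hpM, hpB⟩, rfl⟩
      refine ⟨Stmt12Aux.Fm_mem hpM, ?_⟩
      have : ({l, n} : Finset ℕ).image (Stmt12Aux.g n) = {n - l, n} :=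
        Stmt12Aux.im_pair h1 (by omega)
      exact this ▸ Finset.mem_image_of_mem _ hpB
    · rintro q ⟨hqM, hqB⟩
      refine ⟨Stmt12Aux.Fm n q, ⟨Stmt12Aux.Fm_mem hqM, ?_⟩, Stmt12Aux.Fm_invol hqM⟩
      have him : ({n - l, n} : Finset ℕ).image (Stmt12Aux.g n) = {n - (n - l), n} :=
        Stmt12Aux.im_pair (by omega) (by omega)
      have heq : n - (n - l) = l := by omega
      rw [heq] at him
      exact him ▸ Finset.mem_image_of_mem _ hqB
  have hinj : Set.InjOn (Stmt12Aux.Fm n) S₁ := by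
    intro p hp q hq hpq
    have := congrArg (Stmt12Aux.Fm n) hpq
    rwa [Stmt12Aux.Fm_invol hp.1, Stmt12Aux.Fm_invol hq.1] at this
  calc S₁.ncard = (Stmt12Aux.Fm n '' S₁).ncard := (Set.ncard_image_of_injOn hinj).symm
    _ = S₂.ncard := by rw [himg]
end

section
/- A decreasing binary plane tree T is lonely (i.e., T is the unique decreasing binary plane tree whose postorder reading equals P(T)) if and only if T is full and canonical. -/
open scoped BigOperators

namespace BTree

-- helpers
lemma post_eq_nil : ∀ {T : BTree}, postorder T = [] ↔ T = leaf := by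
  intro T; cases T <;> simp [postorder]

lemma in_eq_nil : ∀ {T : BTree}, inorder T = [] ↔ T = leaf := by
  intro T; cases T <;> simp [inorder]

lemma perm_post_in : ∀ T : BTree, (postorder T).Perm (inorder T) := by
  intro T
  induction T with
  | leaf => simp [postorder, inorder]
  | node l x r ihl ihr =>
    simp only [postorder, inorder, List.append_assoc]
    refine ihl.append ?_
    refine ((ihr.append (List.Perm.refl [x])).trans ?_)
    exact (List.perm_append_comm).trans (by simp)

lemma mem_post_lt {l r : BTree} {x : ℕ}
    (h : IsDecreasing (node l x r)) {a : ℕ}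
    (ha : a ∈ postorder l ++ postorder r) : a < x := by
  rcases List.mem_append.1 ha with h' | h'
  · exact h.1 a ((perm_post_in l).mem_iff.1 h')
  · exact h.2.1 a ((perm_post_in r).mem_iff.1 h')

lemma headD_append {a b : List ℕ} (h : a ≠ []) : (a ++ b).headD 0 = a.headD 0 := by
  cases a with
  | nil => exact absurd rfl h
  | cons x xs => simp

lemma headD_post_in : ∀ {T : BTree}, IsFull T → (postorder T).headD 0 = (inorder T).headD 0 := by
  intro T
  induction T with
  | leaf => intro _; rfl
  | node l x r ihl ihr =>
    intro hf
    by_cases hl : l = leaf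
    · have hr : r = leaf := hf.1.1 hl
      subst hl hr; simp [postorder, inorder]
    · have hl' : postorder l ≠ [] := fun h => hl (post_eq_nil.1 h)
      have hl'' : inorder l ≠ [] := fun h => hl (in_eq_nil.1 h)
      simp only [postorder, inorder, List.append_assoc]
      rw [headD_append hl', headD_append hl'', ihl hf.2.1]

lemma post_node (l : BTree) (x : ℕ) (r : BTree) :
    postorder (node l x r) = (postorder l ++ postorder r) ++ [x] := by
  simp [postorder]

lemma post_concat : ∀ {T : BTree}, T ≠ leaf → ∃ c, postorder T = c ++ [rootD T] := by
  intro T hT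
  cases T with
  | leaf => exact absurd rfl hT
  | node l x r => exact ⟨postorder l ++ postorder r, by simp [postorder, rootD]⟩


lemma lemmaM : ∀ (N : ℕ) (A R : BTree) (p : List ℕ) (k : ℕ),
    (postorder A).length + (postorder R).length ≤ N →
    IsDecreasing A → IsFull R → IsCanonical R → R ≠ leaf →
    p ≠ [] → (∃ m ∈ p, (postorder R).headD 0 < m) →
    0 < k → k ≤ (postorder R).length →
    postorder A = p ++ (postorder R).take k → False := by
  intro N
  induction N with
  | zero =>
    intro A R p k hN _ _ _ hR _ _ _ _ _
    have : postorder R = [] := List.eq_nil_of_length_eq_zero (by omega)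
    exact hR (post_eq_nil.1 this)
  | succ N ih =>
    intro A R p k hN hA hf hc hR hp hm hk hk' heq
    cases R with
    | leaf => exact hR rfl
    | node Rl y Rr =>
      by_cases hRl : Rl = leaf
      · -- R is a single node
        have hRr : Rr = leaf := hf.1.1 hRl
        subst hRl hRr
        have hpost : postorder (node leaf y leaf) = [y] := by simp [postorder]
        rw [hpost] at heq hk' hm
        have hk1 : k = 1 := by simp at hk'; omega
        subst hk1
        cases A with
        | leaf => simp [postorder] at heq
        | node Al z Ar =>
          rw [post_node] at heq
          have h2 : postorder Al ++ postorder Ar = p ∧ [z] = [y] :=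
            List.append_inj' (by simpa using heq) (by simp)
          obtain ⟨m, hmp, hmlt⟩ := hm
          have hmz : m < z := mem_post_lt hA (h2.1 ▸ hmp)
          have hzy : z = y := by simpa using h2.2
          simp at hmlt
          omega
      · have hRr : Rr ≠ leaf := fun h => hRl (hf.1.2 h)
        have hPl : postorder Rl ≠ [] := fun h => hRl (post_eq_nil.1 h)
        have hPr : postorder Rr ≠ [] := fun h => hRr (post_eq_nil.1 h)
        set Pl := postorder Rl with hPldef
        set Pr := postorder Rr with hPrdef
        have hPl2 : (postorder Rl).length = Pl.length := rfl
        have hPr2 : (postorder Rr).length = Pr.length := rfl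
        have hn1 : 0 < Pl.length := List.length_pos_iff.2 hPl
        have hn2 : 0 < Pr.length := List.length_pos_iff.2 hPr
        obtain ⟨c, hc'⟩ := post_concat hRl
        have hblPl : rootD Rl ∈ Pl := by rw [hPldef, hc']; simp
        have hclen : Pl.length = c.length + 1 := by
          rw [hPldef, hc']
          simp only [List.length_append, List.length_cons, List.length_nil]
        have he' : Pr.headD 0 < rootD Rl := by
          have h1 := (hc.1 hRl).2
          rwa [← headD_post_in hf.2.2] at h1
        have hpostR : postorder (node Rl y Rr) = (Pl ++ Pr) ++ [y] := post_node Rl y Rr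
        have hheadR : (postorder (node Rl y Rr)).headD 0 = Pl.headD 0 := by
          rw [hpostR, headD_append (by simp [hPl]), headD_append hPl]
        have hlenR : (postorder (node Rl y Rr)).length = Pl.length + Pr.length + 1 := by
          rw [hpostR]
          simp only [List.length_append, List.length_cons, List.length_nil]
        rw [hlenR] at hk' hN
        rcases le_or_gt k Pl.length with h1 | h1
        · -- (i) t within Pl
          have htake : (postorder (node Rl y Rr)).take k = Pl.take k := by
            rw [hpostR, List.take_append, List.take_append]
            have e1 : k - Pl.length = 0 := by omega
            have e2 : k - (Pl ++ Pr).length = 0 := by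
              simp only [List.length_append]; omega
            rw [e1, e2]; simp
          rw [htake] at heq
          refine ih A Rl p k ?_ hA hf.2.1 hc.2.1 hRl hp ?_ hk (by rw [hPl2]; omega) heq
          · rw [hPl2]; omega
          · obtain ⟨m, hmp, hmlt⟩ := hm
            rw [hheadR] at hmlt
            exact ⟨m, hmp, hmlt⟩
        rcases le_or_gt k (Pl.length + Pr.length) with h2 | h2
        · -- (ii) t = Pl ++ prefix of Pr
          have htake : (postorder (node Rl y Rr)).take k = Pl ++ Pr.take (k - Pl.length) := by
            rw [hpostR, List.take_append, List.take_append]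
            have e2 : k - (Pl ++ Pr).length = 0 := by
              simp only [List.length_append]; omega
            rw [e2, List.take_of_length_le (by omega : Pl.length ≤ k)]
            simp
          rw [htake, ← List.append_assoc] at heq
          refine ih A Rr (p ++ Pl) (k - Pl.length) ?_ hA hf.2.2 hc.2.2 hRr ?_ ?_ ?_ ?_ heq
          · rw [hPr2]; omega
          · simp [hPl]
          · exact ⟨rootD Rl, by simp [hblPl], he'⟩
          · omega
          · rw [hPr2]; omega
        · -- (iii) t = whole postorder R
          have htake : (postorder (node Rl y Rr)).take k = (Pl ++ Pr) ++ [y] := by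
            rw [hpostR]
            exact List.take_of_length_le (by simp only [List.length_append,
              List.length_cons, List.length_nil]; omega)
          rw [htake] at heq
          cases A with
          | leaf => simp [postorder] at heq
          | node Al z Ar =>
            rw [post_node] at heq
            have heq' : (postorder Al ++ postorder Ar) ++ [z] = ((p ++ Pl) ++ Pr) ++ [y] := by
              rw [heq]; simp [List.append_assoc]
            have h3 : postorder Al ++ postorder Ar = (p ++ Pl) ++ Pr :=
              (List.append_inj' heq' (by simp)).1
            have hppl : (p ++ Pl).length = p.length + Pl.length := by
              simp only [List.length_append]
            have hlenA2 : (postorder (node Al z Ar)).length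
                = (postorder Al).length + (postorder Ar).length + 1 := by
              rw [post_node]
              simp only [List.length_append, List.length_cons, List.length_nil]
            rw [hlenA2] at hN
            have hdecl : IsDecreasing Al := hA.2.2.1
            have hdecr : IsDecreasing Ar := hA.2.2.2
            have hsle : (postorder Al).length ≤ (p ++ Pl).length + Pr.length := by
              have h4 := congrArg List.length h3
              simp only [List.length_append] at h4 ⊢
              omega
            have hAl : postorder Al = ((p ++ Pl) ++ Pr).take (postorder Al).length := by
              rw [← h3]; exact List.take_left.symm
            have hAr : postorder Ar = ((p ++ Pl) ++ Pr).drop (postorder Al).length := by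
              rw [← h3]; exact List.drop_left.symm
            rcases Nat.lt_trichotomy (postorder Al).length (p ++ Pl).length with hcmp | hcmp | hcmp
            · -- recurse on Ar with Rr
              have hq : postorder Ar = ((p ++ Pl).drop (postorder Al).length) ++ Pr := by
                rw [hAr, List.drop_append]
                have e0 : (postorder Al).length - (p ++ Pl).length = 0 := by omega
                rw [e0]; simp
              have hql : (p ++ Pl) = (p ++ c) ++ [rootD Rl] := by
                rw [hPldef, hc']; simp
              have hqlen : (p ++ c).length + 1 = (p ++ Pl).length := by
                simp only [List.length_append]; omega
              have hqform : (p ++ Pl).drop (postorder Al).length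
                  = ((p ++ c).drop (postorder Al).length) ++ [rootD Rl] := by
                rw [hql, List.drop_append]
                have e0 : (postorder Al).length - (p ++ c).length = 0 := by omega
                rw [e0]; simp
              refine ih Ar Rr ((p ++ Pl).drop (postorder Al).length) Pr.length ?_ hdecr
                hf.2.2 hc.2.2 hRr ?_ ?_ hn2 (by rw [hPr2]) ?_
              · rw [hPr2]; omega
              · rw [hqform]; simp
              · exact ⟨rootD Rl, by rw [hqform]; simp, he'⟩
              · rw [List.take_length]; exact hq
            · -- recurse on Al with Rl
              have hAl2 : postorder Al = p ++ Pl := by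
                rw [hAl, hcmp, List.take_left]
              refine ih Al Rl p Pl.length ?_ hdecl hf.2.1 hc.2.1 hRl hp ?_ hn1 (by rw [hPl2]) ?_
              · rw [hPl2]; omega
              · obtain ⟨m, hmp, hmlt⟩ := hm
                rw [hheadR] at hmlt
                exact ⟨m, hmp, hmlt⟩
              · rw [List.take_length]; exact hAl2
            · -- recurse on Al with Rr
              have hAl2 : postorder Al = (p ++ Pl) ++ Pr.take ((postorder Al).length - (p ++ Pl).length) := by
                conv_lhs => rw [hAl]
                rw [List.take_append,
                  List.take_of_length_le (le_of_lt hcmp)]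
              refine ih Al Rr (p ++ Pl) ((postorder Al).length - (p ++ Pl).length) ?_ hdecl
                hf.2.2 hc.2.2 hRr ?_ ?_ ?_ ?_ hAl2
              · rw [hPr2]; omega
              · simp [hPl]
              · exact ⟨rootD Rl, by simp [hblPl], he'⟩
              · omega
              · rw [hPr2]; omega


lemma dec_node {l r : BTree} {x : ℕ} : IsDecreasing (node l x r) ↔
    (∀ y ∈ inorder l, y < x) ∧ (∀ y ∈ inorder r, y < x) ∧
    IsDecreasing l ∧ IsDecreasing r := Iff.rfl

lemma full_node {l r : BTree} {x : ℕ} : IsFull (node l x r) ↔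
    ((l = leaf) ↔ (r = leaf)) ∧ IsFull l ∧ IsFull r := Iff.rfl

lemma canon_node {l r : BTree} {x : ℕ} : IsCanonical (node l x r) ↔
    (l ≠ leaf → (r ≠ leaf ∧ (inorder r).headD 0 < rootD l)) ∧
    IsCanonical l ∧ IsCanonical r := Iff.rfl

lemma lonely_of : ∀ (T T' : BTree), IsFull T → IsCanonical T →
    IsDecreasing T' → postorder T' = postorder T → T' = T := by
  intro T
  induction T with
  | leaf =>
    intro T' _ _ _ h
    exact post_eq_nil.1 (by simpa [postorder] using h)
  | node L x R ihL ihR =>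
    intro T' hf hc hdec h
    cases T' with
    | leaf => simp [postorder] at h
    | node L' x' R' =>
      rw [post_node, post_node] at h
      have h2 := List.append_inj' h (by simp)
      have hxx : x' = x := by simpa using h2.2
      subst hxx
      have hW : postorder L' ++ postorder R' = postorder L ++ postorder R := h2.1
      by_cases hL : L = leaf
      · have hR : R = leaf := hf.1.1 hL
        subst hL hR
        simp only [postorder, List.append_nil] at hW
        rw [List.append_eq_nil_iff] at hW
        rw [post_eq_nil.1 hW.1, post_eq_nil.1 hW.2]
      · have hR : R ≠ leaf := fun hh => hL (hf.1.2 hh)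
        have hPL : postorder L ≠ [] := fun hh => hL (post_eq_nil.1 hh)
        have hPR : postorder R ≠ [] := fun hh => hR (post_eq_nil.1 hh)
        obtain ⟨c, hc'⟩ := post_concat hL
        have hclen : (postorder L).length = c.length + 1 := by
          rw [hc']
          simp only [List.length_append, List.length_cons, List.length_nil]
        have hb : rootD L ∈ postorder L := by rw [hc']; simp
        have he : (postorder R).headD 0 < rootD L := by
          have h1 := (hc.1 hL).2
          rwa [← headD_post_in hf.2.2] at h1
        rcases Nat.lt_trichotomy (postorder L').length (postorder L).length with hcmp | hcmp | hcmp
        · exfalso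
          have hR'eq : postorder R' = List.drop (postorder L').length (postorder L ++ postorder R) := by
            rw [← hW]; exact List.drop_left.symm
          have hq : postorder R' = ((postorder L).drop (postorder L').length) ++ postorder R := by
            rw [hR'eq, List.drop_append]
            have e0 : (postorder L').length - (postorder L).length = 0 := by omega
            rw [e0]; simp
          have hqform : (postorder L).drop (postorder L').length
              = (c.drop (postorder L').length) ++ [rootD L] := by
            rw [hc', List.drop_append]
            have e0 : (postorder L').length - c.length = 0 := by omega
            rw [e0]; simp
          refine lemmaM ((postorder R').length + (postorder R).length) R' R
            ((postorder L).drop (postorder L').length) (postorder R).length le_rfl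
            hdec.2.2.2 hf.2.2 hc.2.2 hR ?_ ?_ (List.length_pos_iff.2 hPR) le_rfl ?_
          · rw [hqform]; simp
          · exact ⟨rootD L, by rw [hqform]; simp, he⟩
          · rw [List.take_length]; exact hq
        · have h3 := List.append_inj hW hcmp
          rw [ihL L' hf.2.1 hc.2.1 hdec.2.2.1 h3.1, ihR R' hf.2.2 hc.2.2 hdec.2.2.2 h3.2]
        · exfalso
          have hL'eq : postorder L' = List.take (postorder L').length (postorder L ++ postorder R) := by
            rw [← hW]; exact List.take_left.symm
          have hsle : (postorder L').length ≤ (postorder L).length + (postorder R).length := by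
            have h4 := congrArg List.length hW
            simp only [List.length_append] at h4; omega
          have hL'2 : postorder L' = postorder L ++
              (postorder R).take ((postorder L').length - (postorder L).length) := by
            conv_lhs => rw [hL'eq]
            rw [List.take_append, List.take_of_length_le (le_of_lt hcmp)]
          exact lemmaM ((postorder L').length + (postorder R).length) L' R (postorder L)
            ((postorder L').length - (postorder L).length) le_rfl
            hdec.2.2.1 hf.2.2 hc.2.2 hR hPL ⟨rootD L, hb, he⟩ (by omega) (by omega) hL'2

-- machinery for the forward direction
def delLeft : BTree → BTree
  | leaf => leaf
  | node leaf _ _ => leaf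
  | node (node a y b) x r => node (delLeft (node a y b)) x r

lemma headD_mem {l : List ℕ} (h : l ≠ []) : l.headD 0 ∈ l := by
  cases l with
  | nil => exact absurd rfl h
  | cons a as => simp

lemma root_le : ∀ {T : BTree}, IsDecreasing T → ∀ a ∈ inorder T, a ≤ rootD T := by
  intro T hd a ha
  cases T with
  | leaf => simp [inorder] at ha
  | node l x r =>
    show a ≤ x
    simp only [inorder, List.mem_append, List.mem_cons] at ha
    rcases ha with hh | hh | hh
    · exact le_of_lt (hd.1 a hh)
    · exact le_of_eq hh
    · exact le_of_lt (hd.2.1 a hh)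

lemma rootD_mem_in {T : BTree} (h : T ≠ leaf) : rootD T ∈ inorder T := by
  cases T with
  | leaf => exact absurd rfl h
  | node l x r => simp [inorder, rootD]

lemma delLeft_in : ∀ T : BTree, IsFull T → T ≠ leaf →
    inorder T = (inorder T).headD 0 :: inorder (delLeft T) := by
  intro T
  induction T with
  | leaf => intro _ h; exact absurd rfl h
  | node l x r ihl ihr =>
    intro hf _
    cases l with
    | leaf =>
      have hr : r = leaf := hf.1.1 rfl
      subst hr
      simp [inorder, delLeft]
    | node a y b =>
      have hl : inorder (node a y b) ≠ [] := by simp [inorder]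
      have hstep : inorder (node a y b)
          = (inorder (node a y b)).headD 0 :: inorder (delLeft (node a y b)) :=
        ihl hf.2.1 (by simp)
      show inorder (node a y b) ++ x :: inorder r = _
      rw [show delLeft (node (node a y b) x r) = node (delLeft (node a y b)) x r from rfl]
      have hhead : (inorder (node (node a y b) x r)).headD 0
          = (inorder (node a y b)).headD 0 := by
        show (inorder (node a y b) ++ x :: inorder r).headD 0 = _
        exact headD_append hl
      rw [hhead]
      show _ = (inorder (node a y b)).headD 0 :: (inorder (delLeft (node a y b)) ++ x :: inorder r)
      rw [hstep]
      simp

lemma delLeft_post : ∀ T : BTree, IsFull T → T ≠ leaf →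
    postorder T = (inorder T).headD 0 :: postorder (delLeft T) := by
  intro T
  induction T with
  | leaf => intro _ h; exact absurd rfl h
  | node l x r ihl ihr =>
    intro hf _
    cases l with
    | leaf =>
      have hr : r = leaf := hf.1.1 rfl
      subst hr
      simp [postorder, inorder, delLeft]
    | node a y b =>
      have hl : inorder (node a y b) ≠ [] := by simp [inorder]
      have hlp : postorder (node a y b) ≠ [] := by simp [postorder]
      have hstep : postorder (node a y b)
          = (inorder (node a y b)).headD 0 :: postorder (delLeft (node a y b)) :=
        ihl hf.2.1 (by simp)
      have hhead : (inorder (node (node a y b) x r)).headD 0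
          = (inorder (node a y b)).headD 0 := by
        show (inorder (node a y b) ++ x :: inorder r).headD 0 = _
        exact headD_append hl
      rw [hhead]
      show postorder (node a y b) ++ postorder r ++ [x] = _
      rw [show delLeft (node (node a y b) x r) = node (delLeft (node a y b)) x r from rfl]
      show _ = (inorder (node a y b)).headD 0 ::
        (postorder (delLeft (node a y b)) ++ postorder r ++ [x])
      rw [hstep]
      simp

lemma dec_delLeft : ∀ T : BTree, IsDecreasing T → IsFull T → IsDecreasing (delLeft T) := by
  intro T
  induction T with
  | leaf => intro _ _; trivial
  | node l x r ihl ihr =>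
    intro hd hf
    cases l with
    | leaf => trivial
    | node a y b =>
      rw [show delLeft (node (node a y b) x r) = node (delLeft (node a y b)) x r from rfl]
      have hsub : ∀ z ∈ inorder (delLeft (node a y b)), z ∈ inorder (node a y b) := by
        intro z hz
        rw [delLeft_in (node a y b) hf.2.1 (by simp)]
        exact List.mem_cons_of_mem _ hz
      exact dec_node.2 ⟨fun z hz => hd.1 z (hsub z hz), hd.2.1,
        ihl hd.2.2.1 hf.2.1, hd.2.2.2⟩

lemma sub_dbpt {l r : BTree} {x : ℕ} (h : IsDBPT (node l x r)) : IsDBPT l ∧ IsDBPT r := by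
  have hin : inorder (node l x r) = inorder l ++ x :: inorder r := rfl
  have hsubl : List.Sublist (inorder l) (inorder (node l x r)) := by
    rw [hin]; exact List.sublist_append_left _ _
  have hsubr : List.Sublist (inorder r) (inorder (node l x r)) := by
    rw [hin]
    have h1 : inorder l ++ x :: inorder r = (inorder l ++ [x]) ++ inorder r := by simp
    rw [h1]; exact List.sublist_append_right _ _
  exact ⟨⟨h.1.2.2.1, h.2.1.sublist hsubl, fun y hy => h.2.2 y (hsubl.subset hy)⟩,
    ⟨h.1.2.2.2, h.2.1.sublist hsubr, fun y hy => h.2.2 y (hsubr.subset hy)⟩⟩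

lemma exists_other : ∀ T : BTree, IsDBPT T → ¬(IsFull T ∧ IsCanonical T) →
    ∃ T', IsDBPT T' ∧ postorder T' = postorder T ∧ T' ≠ T := by
  intro T
  induction T with
  | leaf => intro _ hn; exact absurd ⟨trivial, trivial⟩ hn
  | node L x R ihL ihR =>
    intro hT hn
    obtain ⟨hTL, hTR⟩ := sub_dbpt hT
    by_cases hFL : IsFull L ∧ IsCanonical L
    · by_cases hFR : IsFull R ∧ IsCanonical R
      · -- defect at root
        by_cases hL : L = leaf
        · by_cases hR : R = leaf
          · exact absurd ⟨full_node.2 ⟨iff_of_true hL hR, hFL.1, hFR.1⟩,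
              canon_node.2 ⟨fun hne => absurd hL hne, hFL.2, hFR.2⟩⟩ hn
          · -- L = leaf, R ≠ leaf : swap
            subst hL
            have hp2 : (inorder R ++ [x]).Perm (x :: inorder R) := by
              simpa using List.perm_append_comm (l₁ := inorder R) (l₂ := [x])
            refine ⟨node R x leaf, ⟨?_, ?_, ?_⟩, ?_, ?_⟩
            · exact dec_node.2 ⟨hT.1.2.1, by simp [inorder], hT.1.2.2.2, trivial⟩
            · show (inorder R ++ x :: inorder leaf).Nodup
              have : (x :: inorder R).Nodup := by
                have := hT.2.1
                simpa [inorder] using this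
              simpa [inorder] using hp2.nodup_iff.2 this
            · intro y hy
              refine hT.2.2 y ?_
              simp only [inorder, List.mem_append, List.mem_cons] at hy ⊢
              tauto
            · simp [postorder]
            · intro hh
              injection hh with h1 h2 h3
              exact hR h1
        · by_cases hR : R = leaf
          · -- R = leaf, L ≠ leaf : swap
            subst hR
            have hp2 : (x :: inorder L).Perm (inorder L ++ [x]) := by
              simpa using (List.perm_append_comm (l₁ := [x]) (l₂ := inorder L))
            refine ⟨node leaf x L, ⟨?_, ?_, ?_⟩, ?_, ?_⟩
            · exact dec_node.2 ⟨by simp [inorder], hT.1.1, trivial, hT.1.2.2.1⟩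
            · show (inorder leaf ++ x :: inorder L).Nodup
              have : (inorder L ++ [x]).Nodup := by
                have := hT.2.1
                simpa [inorder] using this
              simpa [inorder] using hp2.nodup_iff.2 this
            · intro y hy
              refine hT.2.2 y ?_
              simp only [inorder, List.mem_append, List.mem_cons] at hy ⊢
              tauto
            · simp [postorder]
            · intro hh
              injection hh with h1 h2 h3
              exact hL h1.symm
          · -- both nonempty, canonical defect at root
            have hdef : ¬ ((inorder R).headD 0 < rootD L) := by
              intro hlt
              exact hn ⟨full_node.2 ⟨iff_of_false hL hR, hFL.1, hFR.1⟩,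
                canon_node.2 ⟨fun _ => ⟨hR, hlt⟩, hFL.2, hFR.2⟩⟩
            have hIR : inorder R ≠ [] := fun hh => hR (in_eq_nil.1 hh)
            have hbmem : rootD L ∈ inorder L := rootD_mem_in hL
            have hemem : (inorder R).headD 0 ∈ inorder R := headD_mem hIR
            have hne : rootD L ≠ (inorder R).headD 0 := by
              have hnd := hT.2.1
              have hd2 : List.Disjoint (inorder L) (x :: inorder R) :=
                List.disjoint_of_nodup_append hnd
              intro hcontra
              exact hd2 hbmem (by rw [hcontra] at hbmem ⊢; exact List.mem_cons_of_mem _ hemem)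
            have hbe : rootD L < (inorder R).headD 0 := by
              rcases Nat.lt_trichotomy (rootD L) ((inorder R).headD 0) with hh | hh | hh
              · exact hh
              · exact absurd hh hne
              · exact absurd hh hdef
            refine ⟨node (node L ((inorder R).headD 0) leaf) x (delLeft R), ⟨?_, ?_, ?_⟩, ?_, ?_⟩
            · refine dec_node.2 ⟨?_, ?_, ?_, dec_delLeft R hTR.1 hFR.1⟩
              · intro y hy
                show y < x
                simp only [inorder, List.append_nil, List.mem_append, List.mem_cons] at hy
                rcases hy with hh | hh
                · exact hT.1.1 y hh
                · rcases hh with hh | hh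
                  · exact hh ▸ hT.1.2.1 _ hemem
                  · simp at hh
              · intro y hy
                refine hT.1.2.1 y ?_
                rw [delLeft_in R hFR.1 hR]
                exact List.mem_cons_of_mem _ hy
              · refine dec_node.2 ⟨?_, by simp [inorder], hTL.1, trivial⟩
                intro y hy
                exact lt_of_le_of_lt (root_le hTL.1 y hy) hbe
            · -- nodup
              have hperm : (inorder (node (node L ((inorder R).headD 0) leaf) x (delLeft R))).Perm
                  (inorder (node L x R)) := by
                show ((inorder L ++ (inorder R).headD 0 :: inorder leaf) ++
                  x :: inorder (delLeft R)).Perm (inorder L ++ x :: inorder R)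
                rw [delLeft_in R hFR.1 hR]
                simp only [inorder, List.append_nil, List.append_assoc, List.cons_append,
                  List.nil_append]
                exact List.Perm.append_left _ (List.Perm.swap x _ _)
              exact hperm.nodup_iff.2 hT.2.1
            · intro y hy
              refine hT.2.2 y ?_
              have hperm : (inorder (node (node L ((inorder R).headD 0) leaf) x (delLeft R))).Perm
                  (inorder (node L x R)) := by
                show ((inorder L ++ (inorder R).headD 0 :: inorder leaf) ++
                  x :: inorder (delLeft R)).Perm (inorder L ++ x :: inorder R)
                rw [delLeft_in R hFR.1 hR]
                simp only [inorder, List.append_nil, List.append_assoc, List.cons_append,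
                  List.nil_append]
                exact List.Perm.append_left _ (List.Perm.swap x _ _)
              exact hperm.subset hy
            · show (postorder L ++ postorder leaf ++ [(inorder R).headD 0]) ++
                postorder (delLeft R) ++ [x] = postorder L ++ postorder R ++ [x]
              rw [delLeft_post R hFR.1 hR]
              simp [postorder]
            · intro hh
              injection hh with h1 h2 h3
              have := congrArg (fun t => (inorder t).length) h1
              simp [inorder] at this
      · -- defect inside R
        obtain ⟨R', hR'1, hR'2, hR'3⟩ := ihR hTR hFR
        have hperm : (inorder R').Perm (inorder R) :=
          (perm_post_in R').symm.trans (by rw [hR'2]; exact perm_post_in R)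
        refine ⟨node L x R', ⟨?_, ?_, ?_⟩, ?_, ?_⟩
        · exact dec_node.2 ⟨hT.1.1, fun y hy => hT.1.2.1 y (hperm.subset hy),
            hT.1.2.2.1, hR'1.1⟩
        · show (inorder L ++ x :: inorder R').Nodup
          have hp : (inorder L ++ x :: inorder R').Perm (inorder L ++ x :: inorder R) :=
            List.Perm.append_left _ (hperm.cons x)
          exact hp.nodup_iff.2 hT.2.1
        · intro y hy
          refine hT.2.2 y ?_
          have hp : (inorder L ++ x :: inorder R').Perm (inorder L ++ x :: inorder R) :=
            List.Perm.append_left _ (hperm.cons x)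
          exact hp.subset hy
        · simp [postorder, hR'2]
        · intro hh
          injection hh with h1 h2 h3
          exact hR'3 h3
    · -- defect inside L
      obtain ⟨L', hL'1, hL'2, hL'3⟩ := ihL hTL hFL
      have hperm : (inorder L').Perm (inorder L) :=
        (perm_post_in L').symm.trans (by rw [hL'2]; exact perm_post_in L)
      have hp : (inorder L' ++ x :: inorder R).Perm (inorder L ++ x :: inorder R) :=
        hperm.append_right _
      refine ⟨node L' x R, ⟨?_, ?_, ?_⟩, ?_, ?_⟩
      · exact dec_node.2 ⟨fun y hy => hT.1.1 y (hperm.subset hy), hT.1.2.1,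
          hL'1.1, hT.1.2.2.2⟩
      · exact hp.nodup_iff.2 hT.2.1
      · intro y hy
        exact hT.2.2 y (hp.subset hy)
      · simp [postorder, hL'2]
      · intro hh
        injection hh with h1 h2 h3
        exact hL'3 h1


end BTree

/-- a decreasing binary plane tree is lonely iff it is full and canonical. -/
theorem stmt16 (T : BTree) (hT : BTree.IsDBPT T) :
    BTree.Lonely T ↔ BTree.IsFull T ∧ BTree.IsCanonical T := by
  constructor
  · intro hlon
    by_contra hn
    obtain ⟨T', h1, h2, h3⟩ := BTree.exists_other T hT hn
    exact h3 (hlon.2 T' h1 h2)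
  · rintro ⟨hf, hc⟩
    exact ⟨hT, fun T' hT' hp => BTree.lonely_of T T' hf hc hT'.1 hp⟩
end
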